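/- arXiv:1207.1775 — 4 statements merged into one kernel-verified Lean document; each statement's English description precedes it below -/
import Mathlib

section
/- Let 0 → L → M → N → 0 be a short exact sequence of graded modules over a positively graded, locally finite algebra A generated in degrees 0 and 1, where M is generated in degree s, and let J = ⊕_{i≥1} A_i. Then L is generated in degree s if and only if JM ∩ L = JL. -/
open DirectSum

namespace Stmt3Aux

variable {k A : Type*} [Field k] [Ring A] [Algebra k A]
  (𝒜 : ℕ → Submodule k A) [GradedAlgebra 𝒜]
  {M : Type*} [AddCommGroup M] [Module k M] [Module A M] [IsScalarTower k A M]
  (ℳ : ℕ → Submodule k M)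

set_option linter.unusedSectionVars false

theorem mul_mem_pos (c : A) {b : A} (hb : b ∈ ⨆ j, 𝒜 (j + 1)) :
    c * b ∈ ⨆ j, 𝒜 (j + 1) := by
  classical
  refine Submodule.iSup_induction (motive := fun b : A => c * b ∈ ⨆ j, 𝒜 (j + 1)) _ hb ?_ (by simp) ?_
  · intro j b hbj
    have hc : c * b = ∑ t ∈ DFinsupp.support (decompose 𝒜 c), (decompose 𝒜 c t : A) * b := by
      conv_lhs => rw [← DirectSum.sum_support_decompose 𝒜 c]
      rw [Finset.sum_mul]
    rw [hc]
    refine Submodule.sum_mem _ fun t _ => ?_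
    have h1 : (decompose 𝒜 c t : A) * b ∈ 𝒜 (t + (j + 1)) :=
      SetLike.mul_mem_graded (SetLike.coe_mem _) hbj
    rw [← add_assoc] at h1
    exact Submodule.mem_iSup_of_mem (t + j) h1
  · intro x y hx hy
    rw [mul_add]; exact add_mem hx hy

def Jid : Ideal A := Submodule.span A (⋃ i : ℕ, (𝒜 (i + 1) : Set A))

theorem mem_Jid {j : ℕ} {a : A} (ha : a ∈ 𝒜 (j + 1)) : a ∈ Jid 𝒜 :=
  Submodule.subset_span (Set.mem_iUnion.2 ⟨j, ha⟩)

theorem mem_pos_iSup {a : A} (ha : a ∈ Jid 𝒜) : a ∈ ⨆ j, 𝒜 (j + 1) := by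
  refine Submodule.span_induction ?_ (zero_mem _) (fun x y _ _ hx hy => add_mem hx hy) ?_ ha
  · intro x hx
    rcases Set.mem_iUnion.1 hx with ⟨j, hj⟩
    exact Submodule.mem_iSup_of_mem j hj
  · intro c x _ hx
    rw [smul_eq_mul]
    exact mul_mem_pos 𝒜 c hx

theorem sub_decompose_zero_mem (a : A) : a - (decompose 𝒜 a 0 : A) ∈ Jid 𝒜 := by
  classical
  have hsum : ∑ i ∈ (DFinsupp.support (decompose 𝒜 a) ∪ {0}), (decompose 𝒜 a i : A) = a := by
    rw [← Finset.sum_subset Finset.subset_union_left (fun i _ hi => by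
      rw [DFinsupp.notMem_support_iff.1 hi, Submodule.coe_zero])]
    exact DirectSum.sum_support_decompose 𝒜 a
  have h0 : (0 : ℕ) ∈ DFinsupp.support (decompose 𝒜 a) ∪ {0} := by simp
  have key : (decompose 𝒜 a 0 : A)
      + ∑ i ∈ (DFinsupp.support (decompose 𝒜 a) ∪ {0}).erase 0, (decompose 𝒜 a i : A) = a :=
    (Finset.add_sum_erase _ (fun i => (decompose 𝒜 a i : A)) h0).trans hsum
  have key2 : a - (decompose 𝒜 a 0 : A)
      = ∑ i ∈ (DFinsupp.support (decompose 𝒜 a) ∪ {0}).erase 0, (decompose 𝒜 a i : A) :=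
    sub_eq_of_eq_add' key.symm
  rw [key2]
  refine Submodule.sum_mem _ fun i hi => ?_
  obtain ⟨j, rfl⟩ := Nat.exists_eq_succ_of_ne_zero (Finset.ne_of_mem_erase hi)
  exact mem_Jid 𝒜 (SetLike.coe_mem _)

variable (hMsmul : ∀ (i j : ℕ) (a : A) (x : M), a ∈ 𝒜 i → x ∈ ℳ j → a • x ∈ ℳ (i + j))

include hMsmul in
theorem smul_mem_shift (t : ℕ) (a : A) {x : M} (hx : x ∈ ⨆ d, ℳ (d + t)) :
    a • x ∈ ⨆ d, ℳ (d + t) := by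
  classical
  refine Submodule.iSup_induction (motive := fun x : M => a • x ∈ ⨆ d, ℳ (d + t)) _ hx ?_ (by simp) ?_
  · intro d x hxd
    have hc : a • x = ∑ j ∈ DFinsupp.support (decompose 𝒜 a), (decompose 𝒜 a j : A) • x := by
      conv_lhs => rw [← DirectSum.sum_support_decompose 𝒜 a]
      rw [Finset.sum_smul]
    rw [hc]
    refine Submodule.sum_mem _ fun j _ => ?_
    have h1 := hMsmul j (d + t) ((decompose 𝒜 a j : A)) x (SetLike.coe_mem _) hxd
    rw [← add_assoc] at h1
    exact Submodule.mem_iSup_of_mem (j + d) h1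
  · intro x y hx hy
    rw [smul_add]; exact add_mem hx hy

include hMsmul in
theorem smul_shift (t : ℕ) (S : Submodule A M) (hS : ∀ m ∈ S, m ∈ ⨆ d, ℳ (d + t))
    {x : M} (hx : x ∈ Jid 𝒜 • S) : x ∈ ⨆ d, ℳ (d + (t + 1)) := by
  refine Submodule.smul_induction_on hx ?_ fun a b ha hb => add_mem ha hb
  intro r hr n hn
  refine Submodule.iSup_induction (motive := fun r : A => r • n ∈ ⨆ d, ℳ (d + (t + 1))) _
    (mem_pos_iSup 𝒜 hr) ?_ (by simp) ?_
  · intro j r hrj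
    refine Submodule.iSup_induction (motive := fun n : M => r • n ∈ ⨆ d, ℳ (d + (t + 1))) _
      (hS n hn) ?_ (by simp) ?_
    · intro d m hm
      have h1 := hMsmul (j + 1) (d + t) r m hrj hm
      have h2 : (j + 1) + (d + t) = (j + d) + (t + 1) := by omega
      rw [h2] at h1
      exact Submodule.mem_iSup_of_mem (j + d) h1
    · intro m m' h h'
      rw [smul_add]; exact add_mem h h'
  · intro r r' h h'
    rw [add_smul]; exact add_mem h h'

/-- Lift a `k`-submodule closed under the `A`-action to an `A`-submodule. -/
def toA (P : Submodule k M) (hP : ∀ (a : A) (x : M), x ∈ P → a • x ∈ P) : Submodule A M where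
  carrier := P
  zero_mem' := P.zero_mem
  add_mem' := fun ha hb => P.add_mem ha hb
  smul_mem' := fun a x hx => hP a x hx

set_option maxHeartbeats 1000000 in
include hMsmul in
theorem span_le_key (N : Submodule k M)
    (h0 : ∀ a ∈ 𝒜 0, ∀ x ∈ N, a • x ∈ N) {x : M}
    (hx : x ∈ Submodule.span A (N : Set M)) :
    x ∈ N ⊔ (Jid 𝒜 • Submodule.span A (N : Set M)).restrictScalars k := by
  have hcl : ∀ (a : A) (x : M),
      x ∈ (N ⊔ (Jid 𝒜 • Submodule.span A (N : Set M)).restrictScalars k : Submodule k M) →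
      a • x ∈ (N ⊔ (Jid 𝒜 • Submodule.span A (N : Set M)).restrictScalars k : Submodule k M) := by
    intro a x hx'
    have hxS : x ∈ Submodule.span A (N : Set M) := by
      have hle : (N ⊔ (Jid 𝒜 • Submodule.span A (N : Set M)).restrictScalars k : Submodule k M)
          ≤ (Submodule.span A (N : Set M)).restrictScalars k :=
        sup_le (fun m hm => Submodule.subset_span hm)
          (fun m hm => (Submodule.smul_le_right (I := Jid 𝒜)
            (N := Submodule.span A (N : Set M))) hm)
      exact hle hx'
    obtain ⟨y, hy, z, hz, rfl⟩ := Submodule.mem_sup.1 hx'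
    have hsplit : a • (y + z)
        = (decompose 𝒜 a 0 : A) • (y + z) + (a - (decompose 𝒜 a 0 : A)) • (y + z) := by
      rw [← add_smul, add_sub_cancel]
    rw [hsplit]
    refine add_mem ?_ (Submodule.mem_sup_right ?_)
    · rw [smul_add]
      refine add_mem (Submodule.mem_sup_left (h0 _ (SetLike.coe_mem _) y hy))
        (Submodule.mem_sup_right ?_)
      exact Submodule.smul_mem (Jid 𝒜 • Submodule.span A (N : Set M)) _ hz
    · exact (Submodule.smul_mem_smul (sub_decompose_zero_mem 𝒜 a) hxS :
        _ ∈ Jid 𝒜 • Submodule.span A (N : Set M))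
  have hle : Submodule.span A (N : Set M)
      ≤ toA (N ⊔ (Jid 𝒜 • Submodule.span A (N : Set M)).restrictScalars k) hcl :=
    Submodule.span_le.2 fun m hm => Submodule.mem_sup_left hm
  exact hle hx

end Stmt3Aux

set_option maxHeartbeats 1000000 in
set_option synthInstance.maxHeartbeats 1000000 in
/-- Let `0 → L → M → N → 0` be a short exact sequence of graded modules
over a positively graded, locally finite algebra `A` generated in degrees 0 and 1
(here `L` is identified with a graded submodule of `M` and `N` with the quotient `M/L`),
with `M` generated in degree `s`, and let `J = ⊕_{i ≥ 1} A_i`.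
Then `L` is generated in degree `s` if and only if `JM ∩ L = JL`. -/
theorem stmt3
    {k A : Type*} [Field k] [Ring A] [Algebra k A]
    (𝒜 : ℕ → Submodule k A) [GradedAlgebra 𝒜]
    (hlf : ∀ i, FiniteDimensional k (𝒜 i))
    (hgen : ∀ i, 𝒜 1 * 𝒜 i = 𝒜 (i + 1))
    {M : Type*} [AddCommGroup M] [Module k M] [Module A M] [IsScalarTower k A M]
    (ℳ : ℕ → Submodule k M)
    (hMgr : iSup ℳ = ⊤ ∧ iSupIndep ℳ)
    (hMsmul : ∀ (i j : ℕ) (a : A) (x : M), a ∈ 𝒜 i → x ∈ ℳ j → a • x ∈ ℳ (i + j))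
    -- `L` is a graded (homogeneous) submodule of `M`
    (L : Submodule A M)
    (hLhom : L.restrictScalars k = ⨆ i, (L.restrictScalars k ⊓ ℳ i))
    -- `M` is generated in degree `s`
    (s : ℕ) (hM : Submodule.span A (ℳ s : Set M) = ⊤) :
    -- `L` is generated in degree `s`  ↔  `JM ∩ L = JL`
    Submodule.span A ((L : Set M) ∩ (ℳ s : Set M)) = L ↔
      (Submodule.span A (⋃ i : ℕ, (𝒜 (i + 1) : Set A)) : Ideal A) • (⊤ : Submodule A M) ⊓ L =
        (Submodule.span A (⋃ i : ℕ, (𝒜 (i + 1) : Set A)) : Ideal A) • L := by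
  classical
  obtain ⟨hMtop, hMind⟩ := hMgr
  letI : DirectSum.Decomposition ℳ :=
    (DirectSum.isInternal_submodule_of_iSupIndep_of_iSup_eq_top hMind hMtop).chooseDecomposition
  have hJ : (Submodule.span A (⋃ i : ℕ, (𝒜 (i + 1) : Set A)) : Ideal A) = Stmt3Aux.Jid 𝒜 := rfl
  rw [hJ]
  set Lp : Submodule A M := Submodule.span A ((L : Set M) ∩ (ℳ s : Set M)) with hLp
  -- every element of `M` lives in degrees ≥ s
  have htop : ∀ x : M, x ∈ ⨆ d, ℳ (d + s) := by
    intro x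
    have hx : x ∈ Submodule.span A ((ℳ s : Set M)) := by rw [hM]; exact Submodule.mem_top
    have hle : Submodule.span A ((ℳ s : Set M)) ≤
        Stmt3Aux.toA (⨆ d, ℳ (d + s))
          (fun a y hy => Stmt3Aux.smul_mem_shift 𝒜 ℳ hMsmul s a hy) :=
      Submodule.span_le.2 fun m hm => Submodule.mem_iSup_of_mem 0 (by simpa using hm)
    exact hle hx
  have hJtop : ∀ x ∈ Stmt3Aux.Jid 𝒜 • (⊤ : Submodule A M), x ∈ ⨆ d, ℳ (d + (s + 1)) :=
    fun x hx => Stmt3Aux.smul_shift 𝒜 ℳ hMsmul s ⊤ (fun m _ => htop m) hx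
  have hkill : ∀ i ≤ s, ∀ x ∈ (⨆ d, ℳ (d + (s + 1)) : Submodule k M),
      (DirectSum.decompose ℳ x i : M) = 0 := by
    intro i hi x hx
    refine Submodule.iSup_induction
      (motive := fun x : M => (DirectSum.decompose ℳ x i : M) = 0) _ hx ?_ (by simp) ?_
    · intro d y hyd
      exact DirectSum.decompose_of_mem_ne ℳ hyd (by omega)
    · intro y z hy hz
      rw [DirectSum.decompose_add]
      simp [DirectSum.add_apply, hy, hz]
  have hLdegmem : ∀ x ∈ L, x ∈ ⨆ i, (L.restrictScalars k ⊓ ℳ i) := by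
    intro x hx
    have hx' : x ∈ L.restrictScalars k := hx
    rw [hLhom] at hx'
    exact hx'
  have h0M : ∀ a ∈ 𝒜 0, ∀ y ∈ ℳ s, a • y ∈ ℳ s := fun a ha y hy => by
    simpa using hMsmul 0 s a y ha hy
  constructor
  · -- L generated in degree s → JM ∩ L = JL
    intro hLgen
    refine le_antisymm ?_
      (le_inf (smul_mono_right _ le_top) Submodule.smul_le_right)
    rintro x ⟨hx1, hx2⟩
    have h0L : ∀ a ∈ 𝒜 0, ∀ y ∈ (L.restrictScalars k ⊓ ℳ s : Submodule k M),
        a • y ∈ (L.restrictScalars k ⊓ ℳ s : Submodule k M) := fun a ha y hy =>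
      ⟨L.smul_mem a hy.1, by simpa using hMsmul 0 s a y ha hy.2⟩
    have hx3 : x ∈ Submodule.span A ((L.restrictScalars k ⊓ ℳ s : Submodule k M) : Set M) := by
      show x ∈ Submodule.span A ((L : Set M) ∩ (ℳ s : Set M))
      rw [← hLp, hLgen]; exact hx2
    have h1 := Stmt3Aux.span_le_key 𝒜 ℳ hMsmul (L.restrictScalars k ⊓ ℳ s) h0L hx3
    have hspanL : Submodule.span A ((L.restrictScalars k ⊓ ℳ s : Submodule k M) : Set M) = L := by
      show Submodule.span A ((L : Set M) ∩ (ℳ s : Set M)) = L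
      rw [← hLp]; exact hLgen
    rw [hspanL] at h1
    obtain ⟨y, hy, z, hz, hxyz⟩ := Submodule.mem_sup.1 h1
    have hzJL : z ∈ Stmt3Aux.Jid 𝒜 • L := hz
    have hzJT : z ∈ Stmt3Aux.Jid 𝒜 • (⊤ : Submodule A M) :=
      smul_mono_right (Stmt3Aux.Jid 𝒜) (le_top : L ≤ ⊤) hzJL
    have hzs : (DirectSum.decompose ℳ z s : M) = 0 := hkill s le_rfl z (hJtop z hzJT)
    have hxs : (DirectSum.decompose ℳ x s : M) = 0 := hkill s le_rfl x (hJtop x hx1)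
    have hy0 : y = 0 := by
      have h4 : (DirectSum.decompose ℳ (y + z) s : M) = y := by
        rw [DirectSum.decompose_add]
        simp [DirectSum.add_apply, hzs, DirectSum.decompose_of_mem_same ℳ hy.2]
      rw [hxyz, hxs] at h4
      exact h4.symm
    rw [← hxyz, hy0, zero_add]
    exact hzJL
  · -- JM ∩ L = JL → L generated in degree s
    intro hJML
    have key : ∀ i : ℕ, ∀ x, x ∈ L → x ∈ ℳ i → x ∈ Lp := by
      intro i
      induction i using Nat.strong_induction_on with
      | _ i IH =>
      intro x hxL hxi
      by_cases his : i = s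
      · exact Submodule.subset_span ⟨hxL, his ▸ hxi⟩
      · have hx0 : x ∈ Submodule.span A ((ℳ s : Set M)) := by rw [hM]; exact Submodule.mem_top
        have hx1 := Stmt3Aux.span_le_key 𝒜 ℳ hMsmul (ℳ s) h0M hx0
        rw [hM] at hx1
        obtain ⟨y, hy, z, hz, hxyz⟩ := Submodule.mem_sup.1 hx1
        have hzJ : z ∈ Stmt3Aux.Jid 𝒜 • (⊤ : Submodule A M) := hz
        have hzs : (DirectSum.decompose ℳ z s : M) = 0 := hkill s le_rfl z (hJtop z hzJ)
        have hxs : (DirectSum.decompose ℳ x s : M) = 0 :=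
          DirectSum.decompose_of_mem_ne ℳ hxi his
        have hy0 : y = 0 := by
          have h4 : (DirectSum.decompose ℳ (y + z) s : M) = y := by
            rw [DirectSum.decompose_add]
            simp [DirectSum.add_apply, hzs, DirectSum.decompose_of_mem_same ℳ hy]
          rw [hxyz, hxs] at h4
          exact h4.symm
        have hxJ : x ∈ Stmt3Aux.Jid 𝒜 • (⊤ : Submodule A M) := by
          rw [← hxyz, hy0, zero_add]; exact hzJ
        by_cases his' : i < s
        · have hx0' : x = 0 := by
            have h5 : (DirectSum.decompose ℳ x i : M) = x :=
              DirectSum.decompose_of_mem_same ℳ hxi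
            have h6 : (DirectSum.decompose ℳ x i : M) = 0 :=
              hkill i (le_of_lt his') x (hJtop x hxJ)
            rw [h5] at h6; exact h6
          rw [hx0']; exact zero_mem _
        · have hxJL : x ∈ Stmt3Aux.Jid 𝒜 • L := by
            rw [← hJML]; exact ⟨hxJ, hxL⟩
          have hfin : ∀ w ∈ Stmt3Aux.Jid 𝒜 • L, (DirectSum.decompose ℳ w i : M) ∈ Lp := by
            intro w hw
            refine Submodule.smul_induction_on hw ?_ ?_
            · intro r hr n hn
              refine Submodule.iSup_induction
                (motive := fun r : A => (DirectSum.decompose ℳ (r • n) i : M) ∈ Lp) _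
                (Stmt3Aux.mem_pos_iSup 𝒜 hr) ?_ (by simp) ?_
              · intro j r hrj
                refine Submodule.iSup_induction
                  (motive := fun n : M => (DirectSum.decompose ℳ (r • n) i : M) ∈ Lp) _
                  (hLdegmem n hn) ?_ (by simp) ?_
                · intro i' m hm
                  have hdeg : r • m ∈ ℳ ((j + 1) + i') := hMsmul (j + 1) i' r m hrj hm.2
                  by_cases he : (j + 1) + i' = i
                  · rw [DirectSum.decompose_of_mem_same ℳ (he ▸ hdeg)]
                    exact Submodule.smul_mem Lp r (IH i' (by omega) m hm.1 hm.2)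
                  · rw [DirectSum.decompose_of_mem_ne ℳ hdeg he]
                    exact zero_mem _
                · intro m m' h h'
                  rw [smul_add, DirectSum.decompose_add]
                  simpa [DirectSum.add_apply] using add_mem h h'
              · intro r r' h h'
                rw [add_smul, DirectSum.decompose_add]
                simpa [DirectSum.add_apply] using add_mem h h'
            · intro w w' h h'
              rw [DirectSum.decompose_add]
              simpa [DirectSum.add_apply] using add_mem h h'
          have hx5 := hfin x hxJL
          rwa [DirectSum.decompose_of_mem_same ℳ hxi] at hx5
    refine le_antisymm (Submodule.span_le.2 fun m hm => hm.1) ?_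
    intro x hx
    refine Submodule.iSup_induction
      (motive := fun x : M => x ∈ Lp) _ (hLdegmem x hx) ?_ (zero_mem _)
      (fun a b ha hb => add_mem ha hb)
    intro i m hm
    exact key i m hm.1 hm.2
end

section
/- Let A be a positively graded, locally finite algebra generated in degrees 0 and 1, and let M be a graded A-module generated in degree 0. Then M is Koszul (i.e., every i-th graded syzygy Ω^i(M) is generated in degree i) if and only if for all i > 0, Ω^i(M) ⊆ J P^{i-1} and Ω^i(M) ∩ J² P^{i-1} = J Ω^i(M), where P^{i-1} is a graded projective cover of Ω^{i-1}(M) and J = ⊕_{i≥1} A_i. -/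
open DirectSum

section Aux

variable {k A : Type*} [Field k] [Ring A] [Algebra k A]
variable (𝒜 : ℕ → Submodule k A) [GradedAlgebra 𝒜]

/-- The graded radical ideal `J = ⊕_{n ≥ 1} A_n`. -/
def Jid : Ideal A := Submodule.span A (⋃ n : ℕ, (𝒜 (n + 1) : Set A))

lemma mem_Jid {n : ℕ} (hn : n ≠ 0) {a : A} (ha : a ∈ 𝒜 n) : a ∈ Jid 𝒜 := by
  obtain ⟨m, rfl⟩ := Nat.exists_eq_succ_of_ne_zero hn
  exact Submodule.subset_span (Set.mem_iUnion.2 ⟨m, ha⟩)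

lemma Jid_mul_mem {a : A} (ha : a ∈ Jid 𝒜) (b : A) : a * b ∈ Jid 𝒜 := by
  classical
  induction ha using Submodule.span_induction with
  | mem c hc =>
      obtain ⟨n, hc⟩ := Set.mem_iUnion.1 hc
      rw [← DirectSum.sum_support_decompose 𝒜 b, Finset.mul_sum]
      refine Submodule.sum_mem _ fun m _ => ?_
      exact mem_Jid 𝒜 (by omega) (SetLike.mul_mem_graded hc (DirectSum.decompose 𝒜 b m).2)
  | zero => simp
  | add x y hx hy ihx ihy => rw [add_mul]; exact add_mem ihx ihy
  | smul e x hx ih => rw [smul_eq_mul, mul_assoc, ← smul_eq_mul]; exact Submodule.smul_mem _ _ ih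

variable {X : Type*} [AddCommGroup X] [Module k X] [Module A X] [IsScalarTower k A X]

lemma kA_smul_comm (c : k) (b : A) (x : X) : b • c • x = c • b • x := by
  rw [← algebraMap_smul A c x, ← mul_smul, ← Algebra.commutes c b, mul_smul, algebraMap_smul]

variable (G : ℕ → Submodule k X) [DirectSum.Decomposition G]

lemma proj_mem_span (S : Set X) (hS : ∀ s ∈ S, ∃ d, s ∈ G d) {x : X}
    (hx : x ∈ Submodule.span k S) (t : ℕ) :
    ((DirectSum.decompose G x t : G t) : X) ∈ Submodule.span k (S ∩ (G t : Set X)) := by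
  induction hx using Submodule.span_induction with
  | mem s hs =>
      obtain ⟨dg, hd⟩ := hS s hs
      rcases eq_or_ne dg t with rfl | h
      · rw [DirectSum.decompose_of_mem_same G hd]
        exact Submodule.subset_span ⟨hs, hd⟩
      · rw [DirectSum.decompose_of_mem_ne G hd h]
        exact zero_mem _
  | zero => rw [DirectSum.decompose_zero]; simp
  | add x y hx hy ihx ihy =>
      rw [DirectSum.decompose_add]
      simp only [DirectSum.add_apply, Submodule.coe_add]
      exact add_mem ihx ihy
  | smul c x hx ih =>
      rw [DirectSum.decompose_smul]
      simp only [DFinsupp.smul_apply, SetLike.val_smul]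
      exact Submodule.smul_mem _ _ ih

lemma mem_of_proj {Q : Submodule k X} {x : X}
    (h : ∀ t, ((DirectSum.decompose G x t : G t) : X) ∈ Q) : x ∈ Q := by
  classical
  rw [← DirectSum.sum_support_decompose G x]
  exact Submodule.sum_mem _ fun t _ => h t

/-- Homogeneous-coefficient smul set. -/
def hmSet (S : Set X) : Set X := {x | ∃ n : ℕ, ∃ a ∈ 𝒜 n, ∃ s ∈ S, x = a • s}

/-- Positive-degree homogeneous-coefficient smul set. -/
def hmSetP (S : Set X) : Set X := {x | ∃ n : ℕ, n ≠ 0 ∧ ∃ a ∈ 𝒜 n, ∃ s ∈ S, x = a • s}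

lemma span_hmSet_smul_mem {S : Set X} (b : A) {x : X}
    (hx : x ∈ Submodule.span k (hmSet 𝒜 S)) : b • x ∈ Submodule.span k (hmSet 𝒜 S) := by
  classical
  induction hx using Submodule.span_induction with
  | mem y hy =>
      obtain ⟨n, a, ha, s, hs, rfl⟩ := hy
      rw [← mul_smul, ← DirectSum.sum_support_decompose 𝒜 b, Finset.sum_mul, Finset.sum_smul]
      refine Submodule.sum_mem _ fun m _ => Submodule.subset_span ?_
      exact ⟨m + n, _, SetLike.mul_mem_graded (DirectSum.decompose 𝒜 b m).2 ha, s, hs, rfl⟩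
  | zero => simp
  | add x y hx hy ihx ihy => rw [smul_add]; exact add_mem ihx ihy
  | smul c y hy ih => rw [kA_smul_comm]; exact Submodule.smul_mem _ _ ih

lemma span_hmSetP_smul_mem {S : Set X} (b : A) {x : X}
    (hx : x ∈ Submodule.span k (hmSetP 𝒜 S)) : b • x ∈ Submodule.span k (hmSetP 𝒜 S) := by
  classical
  induction hx using Submodule.span_induction with
  | mem y hy =>
      obtain ⟨n, hn, a, ha, s, hs, rfl⟩ := hy
      rw [← mul_smul, ← DirectSum.sum_support_decompose 𝒜 b, Finset.sum_mul, Finset.sum_smul]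
      refine Submodule.sum_mem _ fun m _ => Submodule.subset_span ?_
      exact ⟨m + n, by omega, _,
        SetLike.mul_mem_graded (DirectSum.decompose 𝒜 b m).2 ha, s, hs, rfl⟩
  | zero => simp
  | add x y hx hy ihx ihy => rw [smul_add]; exact add_mem ihx ihy
  | smul c y hy ih => rw [kA_smul_comm]; exact Submodule.smul_mem _ _ ih

/-- `A`-submodule structure on `span k (hmSet 𝒜 S)`. -/
def hmMod (S : Set X) : Submodule A X where
  carrier := Submodule.span k (hmSet 𝒜 S)
  add_mem' h1 h2 := add_mem h1 h2
  zero_mem' := zero_mem _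
  smul_mem' b x hx := span_hmSet_smul_mem 𝒜 b hx

/-- `A`-submodule structure on `span k (hmSetP 𝒜 S)`. -/
def hmModP (S : Set X) : Submodule A X where
  carrier := Submodule.span k (hmSetP 𝒜 S)
  add_mem' h1 h2 := add_mem h1 h2
  zero_mem' := zero_mem _
  smul_mem' b x hx := span_hmSetP_smul_mem 𝒜 b hx

lemma span_eq_hmMod (S : Set X) : Submodule.span A S = hmMod 𝒜 S := by
  refine le_antisymm (Submodule.span_le.2 fun s hs => ?_) fun x hx => ?_
  · exact Submodule.subset_span ⟨0, 1, SetLike.one_mem_graded 𝒜, s, hs, (one_smul A s).symm⟩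
  · replace hx : x ∈ Submodule.span k (hmSet 𝒜 S) := hx
    induction hx using Submodule.span_induction with
    | mem y hy =>
        obtain ⟨n, a, ha, s, hs, rfl⟩ := hy
        exact Submodule.smul_mem _ a (Submodule.subset_span hs)
    | zero => exact zero_mem _
    | add x y hx hy ihx ihy => exact add_mem ihx ihy
    | smul c y hy ih =>
        rw [← algebraMap_smul A c y]; exact Submodule.smul_mem _ _ ih

lemma Jid_smul_eq {W : Submodule A X}
    (hW : ∀ x ∈ W, ∀ t, ((DirectSum.decompose G x t : G t) : X) ∈ W) :
    Jid 𝒜 • W = hmModP 𝒜 {x : X | x ∈ W ∧ ∃ dg, x ∈ G dg} := by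
  classical
  refine le_antisymm (Submodule.smul_le.2 fun a ha w hw => ?_) fun x hx => ?_
  · induction ha using Submodule.span_induction with
    | mem c hc =>
        obtain ⟨n, hc⟩ := Set.mem_iUnion.1 hc
        show c • w ∈ Submodule.span k (hmSetP 𝒜 {x : X | x ∈ W ∧ ∃ dg, x ∈ G dg})
        rw [← DirectSum.sum_support_decompose G w, Finset.smul_sum]
        refine Submodule.sum_mem _ fun t _ => Submodule.subset_span ?_
        exact ⟨n + 1, Nat.succ_ne_zero n, c, hc, _,
          ⟨hW w hw t, ⟨t, (DirectSum.decompose G w t).2⟩⟩, rfl⟩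
    | zero => rw [zero_smul]; exact zero_mem _
    | add a b ha hb iha ihb => rw [add_smul]; exact add_mem iha ihb
    | smul b a ha ih => rw [smul_eq_mul, mul_smul]; exact Submodule.smul_mem _ b ih
  · replace hx : x ∈ Submodule.span k (hmSetP 𝒜 {x : X | x ∈ W ∧ ∃ dg, x ∈ G dg}) := hx
    induction hx using Submodule.span_induction with
    | mem y hy =>
        obtain ⟨n, hn, a, ha, s, hs, rfl⟩ := hy
        exact Submodule.smul_mem_smul (mem_Jid 𝒜 hn ha) hs.1
    | zero => exact zero_mem _
    | add x y hx hy ihx ihy => exact add_mem ihx ihy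
    | smul c y hy ih =>
        rw [← algebraMap_smul A c y]; exact Submodule.smul_mem _ _ ih

/-- The set of elements of degree at least `m`. -/
def USet (m : ℕ) : Set X := {x | ∃ t, x ∈ G (m + t)}

/-- The submodule of elements of degree at least `m`. -/
def Umod (A' : Type*) [Ring A'] [Module A' X] (m : ℕ) : Submodule A' X :=
  Submodule.span A' (USet G m)

lemma mem_USet {m t : ℕ} (h : m ≤ t) {x : X} (hx : x ∈ G t) : x ∈ USet G m :=
  ⟨t - m, by rwa [Nat.add_sub_cancel' h]⟩

lemma mem_Umod {m t : ℕ} (h : m ≤ t) {x : X} (hx : x ∈ G t) : x ∈ Umod G A m :=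
  Submodule.subset_span (mem_USet G h hx)

variable (hsm : ∀ (n j : ℕ) (a : A) (x : X), a ∈ 𝒜 n → x ∈ G j → a • x ∈ G (n + j))

include hsm in
lemma Umod_carrier (m : ℕ) {x : X} (hx : x ∈ Umod G A m) :
    x ∈ Submodule.span k (USet G m) := by
  rw [Umod, span_eq_hmMod 𝒜] at hx
  replace hx : x ∈ Submodule.span k (hmSet 𝒜 (USet G m)) := hx
  refine Submodule.span_le.2 ?_ hx
  rintro y ⟨n, a, ha, s, ⟨t, hs⟩, rfl⟩
  refine Submodule.subset_span ⟨n + t, ?_⟩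
  have := hsm n (m + t) a s ha hs
  rwa [show n + (m + t) = m + (n + t) by omega] at this

include hsm in
lemma proj_Umod_zero {m t : ℕ} (ht : t < m) {x : X} (hx : x ∈ Umod G A m) :
    ((DirectSum.decompose G x t : G t) : X) = 0 := by
  have h1 := proj_mem_span G (USet G m) (fun s hs => hs.elim fun u hu => ⟨m + u, hu⟩)
    (Umod_carrier 𝒜 G hsm m hx) t
  have h2 : ∀ y ∈ USet G m ∩ (G t : Set X), y = (0 : X) := by
    rintro y ⟨⟨u, hy⟩, hyt⟩
    by_contra h0
    exact absurd (DirectSum.degree_eq_of_mem_mem G hy hyt h0) (by omega)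
  have h3 : Submodule.span k (USet G m ∩ (G t : Set X)) ≤ ⊥ :=
    Submodule.span_le.2 fun y hy => (Submodule.mem_bot k).2 (h2 y hy)
  simpa using h3 h1

include hsm in
lemma lowZero {i t : ℕ}
    (Htop : (⊤ : Submodule A X) = Submodule.span A (G i : Set X)) (ht : t < i) {x : X}
    (hx : x ∈ G t) : x = 0 := by
  have h1 : x ∈ Umod G A i := by
    have hx2 : x ∈ (⊤ : Submodule A X) := trivial
    rw [Htop] at hx2
    have hsub : (G i : Set X) ⊆ USet G i := fun y hy => ⟨0, hy⟩
    exact Submodule.span_mono hsub hx2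
  have := proj_Umod_zero 𝒜 G hsm ht h1
  rwa [DirectSum.decompose_of_mem_same G hx] at this

include hsm in
lemma Jid_smul_Umod (m : ℕ) : Jid 𝒜 • Umod G A m ≤ Umod G A (m + 1) := by
  classical
  refine Submodule.smul_le.2 fun a ha w hw => ?_
  induction hw using Submodule.span_induction generalizing a with
  | mem g hg =>
      obtain ⟨t, hg⟩ := hg
      induction ha using Submodule.span_induction with
      | mem c hc =>
          obtain ⟨n, hc⟩ := Set.mem_iUnion.1 hc
          exact mem_Umod G (by omega) (hsm (n + 1) (m + t) c g hc hg)
      | zero => rw [zero_smul]; exact zero_mem _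
      | add x y hx hy ihx ihy => rw [add_smul]; exact add_mem ihx ihy
      | smul b c hc ih => rw [smul_eq_mul, mul_smul]; exact Submodule.smul_mem _ b ih
  | zero => rw [smul_zero]; exact zero_mem _
  | add x y hx hy ihx ihy => rw [smul_add]; exact add_mem (ihx a ha) (ihy a ha)
  | smul b w' hw' ih =>
      rw [← mul_smul]
      exact ih (a * b) (Jid_mul_mem 𝒜 ha b)

include hsm in
lemma B1 (i : ℕ) (Htop : (⊤ : Submodule A X) = Submodule.span A (G i : Set X)) :
    Jid 𝒜 • (⊤ : Submodule A X) = Umod G A (i + 1) := by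
  classical
  refine le_antisymm (Submodule.smul_le.2 fun a ha x _ => ?_) (Submodule.span_le.2 ?_)
  · induction ha using Submodule.span_induction with
    | mem c hc =>
        obtain ⟨n, hc⟩ := Set.mem_iUnion.1 hc
        rw [← DirectSum.sum_support_decompose G x, Finset.smul_sum]
        refine Submodule.sum_mem _ fun t _ => ?_
        rcases lt_or_ge t i with h | h
        · rw [lowZero 𝒜 G hsm Htop h (DirectSum.decompose G x t).2, smul_zero]
          exact zero_mem _
        · exact mem_Umod G (by omega) (hsm (n + 1) t c _ hc (DirectSum.decompose G x t).2)
    | zero => rw [zero_smul]; exact zero_mem _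
    | add a b ha hb iha ihb => rw [add_smul]; exact add_mem iha ihb
    | smul b a ha ih => rw [smul_eq_mul, mul_smul]; exact Submodule.smul_mem _ b ih
  · rintro y ⟨t, hy⟩
    have h1 : y ∈ Submodule.span k (hmSet 𝒜 (G i : Set X)) := by
      have h : y ∈ (⊤ : Submodule A X) := trivial
      rw [Htop, span_eq_hmMod 𝒜] at h
      exact h
    have h2 := proj_mem_span G _ (fun z hz => ?_) h1 (i + 1 + t)
    swap
    · obtain ⟨n, a, ha, g, hg, rfl⟩ := hz
      exact ⟨n + i, hsm n i a g ha hg⟩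
    rw [DirectSum.decompose_of_mem_same G hy] at h2
    have h4 : y ∈ ((Jid 𝒜 • (⊤ : Submodule A X)).restrictScalars k) := by
      refine Submodule.span_le.2 ?_ h2
      rintro z ⟨⟨n, a, ha, g, hg, rfl⟩, hzt⟩
      rcases eq_or_ne (a • g) 0 with h0 | h0
      · rw [h0]; exact zero_mem _
      · have hdeg := DirectSum.degree_eq_of_mem_mem G (hsm n i a g ha hg) hzt h0
        exact Submodule.smul_mem_smul (R := A) (mem_Jid 𝒜 (by omega) ha) Submodule.mem_top
    exact h4

include hsm in
lemma B2 (hAgen : ∀ n, 𝒜 1 * 𝒜 n = 𝒜 (n + 1)) (i : ℕ)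
    (Htop : (⊤ : Submodule A X) = Submodule.span A (G i : Set X)) :
    Jid 𝒜 • (Jid 𝒜 • (⊤ : Submodule A X)) = Umod G A (i + 2) := by
  classical
  refine le_antisymm ?_ (Submodule.span_le.2 ?_)
  · rw [B1 𝒜 G hsm i Htop]
    exact Jid_smul_Umod 𝒜 G hsm (i + 1)
  · rintro y ⟨t, hy⟩
    have h1 : y ∈ Submodule.span k (hmSet 𝒜 (G i : Set X)) := by
      have h : y ∈ (⊤ : Submodule A X) := trivial
      rw [Htop, span_eq_hmMod 𝒜] at h
      exact h
    have h2 := proj_mem_span G _ (fun z hz => ?_) h1 (i + 2 + t)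
    swap
    · obtain ⟨n, a, ha, g, hg, rfl⟩ := hz
      exact ⟨n + i, hsm n i a g ha hg⟩
    rw [DirectSum.decompose_of_mem_same G hy] at h2
    have h4 : y ∈ ((Jid 𝒜 • (Jid 𝒜 • (⊤ : Submodule A X))).restrictScalars k) := by
      refine Submodule.span_le.2 ?_ h2
      rintro z ⟨⟨n, a, ha, g, hg, rfl⟩, hzt⟩
      rcases eq_or_ne (a • g) 0 with h0 | h0
      · rw [h0]; exact zero_mem _
      · have hdeg := DirectSum.degree_eq_of_mem_mem G (hsm n i a g ha hg) hzt h0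
        have hn : n = t + 1 + 1 := by omega
        rw [hn, ← hAgen (t + 1)] at ha
        refine Submodule.mul_induction_on ha (fun u hu v hv => ?_) (fun r s hr hs => ?_)
        · rw [mul_smul]
          have hvg : v • g ∈ Umod G A (i + 1) :=
            mem_Umod G (by omega) (hsm (t + 1) i v g hv hg)
          rw [← B1 𝒜 G hsm i Htop] at hvg
          exact Submodule.smul_mem_smul (R := A) (mem_Jid 𝒜 one_ne_zero hu) hvg
        · rw [add_smul]; exact add_mem hr hs
    exact h4

variable {Y : Type*} [AddCommGroup Y] [Module k Y] [Module A Y] [IsScalarTower k A Y]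
variable (GY : ℕ → Submodule k Y) [DirectSum.Decomposition GY]

lemma decompose_map (f : Y →ₗ[A] X) (hf : ∀ (t : ℕ) (y : Y), y ∈ GY t → f y ∈ G t)
    (y : Y) (t : ℕ) :
    ((DirectSum.decompose G (f y) t : G t) : X) =
      f ((DirectSum.decompose GY y t : GY t) : Y) := by
  induction y using DirectSum.Decomposition.inductionOn GY with
  | zero => simp
  | @homogeneous i m =>
      rcases eq_or_ne i t with rfl | h
      · rw [DirectSum.decompose_of_mem_same G (hf _ _ m.2),
          DirectSum.decompose_of_mem_same GY m.2]
      · rw [DirectSum.decompose_of_mem_ne G (hf _ _ m.2) h,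
          DirectSum.decompose_of_mem_ne GY m.2 h, map_zero]
  | add x y ihx ihy =>
      rw [map_add, DirectSum.decompose_add, DirectSum.decompose_add, DirectSum.add_apply,
        DirectSum.add_apply, Submodule.coe_add, Submodule.coe_add, map_add, ihx, ihy]

lemma range_graded (f : Y →ₗ[A] X) (hf : ∀ (t : ℕ) (y : Y), y ∈ GY t → f y ∈ G t) :
    ∀ x ∈ LinearMap.range f, ∀ t,
      ((DirectSum.decompose G x t : G t) : X) ∈ LinearMap.range f := by
  rintro x ⟨y, rfl⟩ t
  rw [decompose_map G GY f hf y t]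
  exact ⟨_, rfl⟩

lemma gradSurj (f : Y →ₗ[A] X) (hf : ∀ (t : ℕ) (y : Y), y ∈ GY t → f y ∈ G t)
    {w : X} {s : ℕ} (hw : w ∈ LinearMap.range f) (hws : w ∈ G s) :
    ∃ z, z ∈ GY s ∧ f z = w := by
  obtain ⟨y, rfl⟩ := hw
  exact ⟨_, (DirectSum.decompose GY y s).2,
    by rw [← decompose_map G GY f hf y s, DirectSum.decompose_of_mem_same G hws]⟩

include hsm in
lemma genStep (f : Y →ₗ[A] X) (hf : ∀ (t : ℕ) (y : Y), y ∈ GY t → f y ∈ G t) (s : ℕ)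
    (hgen : LinearMap.range f =
      Submodule.span A ((LinearMap.range f : Set X) ∩ (G s : Set X)))
    (hmin' : ∀ N : Submodule A Y, N ⊔ LinearMap.ker f = ⊤ → N = ⊤) :
    (⊤ : Submodule A Y) = Submodule.span A (GY s : Set Y) := by
  set N : Submodule A Y := Submodule.span A (GY s : Set Y) with hN
  refine (hmin' N ?_).symm
  rw [eq_top_iff]
  intro y _
  have key : ∀ t, ((DirectSum.decompose GY y t : GY t) : Y) ∈
      (N ⊔ LinearMap.ker f).restrictScalars k := by
    intro t
    set yt : Y := ((DirectSum.decompose GY y t : GY t) : Y) with hyt_def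
    have hyt : yt ∈ GY t := (DirectSum.decompose GY y t).2
    have h1 : f yt ∈ Submodule.span k
        (hmSet 𝒜 ((LinearMap.range f : Set X) ∩ (G s : Set X))) := by
      have hr : f yt ∈ LinearMap.range f := ⟨yt, rfl⟩
      rw [hgen, span_eq_hmMod 𝒜] at hr
      exact hr
    have h2 := proj_mem_span G _ (fun z hz => ?_) h1 t
    swap
    · obtain ⟨n, a, ha, w, hw, rfl⟩ := hz
      exact ⟨n + s, hsm n s a w ha hw.2⟩
    rw [DirectSum.decompose_of_mem_same G (hf t yt hyt)] at h2
    have h3 : f yt ∈ (Submodule.map f N).restrictScalars k := by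
      refine Submodule.span_le.2 ?_ h2
      rintro z ⟨⟨n, a, ha, w, ⟨hwr, hws⟩, rfl⟩, _⟩
      obtain ⟨u, hu, hfu⟩ := gradSurj G GY f hf hwr hws
      exact ⟨a • u, Submodule.smul_mem _ a (Submodule.subset_span hu),
        by rw [map_smul, hfu]⟩
    obtain ⟨z, hzN, hz⟩ := h3
    have hmem : yt ∈ N ⊔ LinearMap.ker f :=
      Submodule.mem_sup.2 ⟨z, hzN, yt - z,
        by rw [LinearMap.mem_ker, map_sub, hz, sub_self], by abel⟩
    exact hmem
  exact mem_of_proj GY key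

end Aux

/-- Let `A` be a positively graded, locally finite algebra generated in
degrees 0 and 1, and let `M` be a graded `A`-module generated in degree 0, with a minimal
graded projective resolution `⋯ → P¹ → P⁰ → M → 0`.  Then `M` is Koszul (every graded
syzygy `Ω^i(M)` is generated in degree `i`) if and only if for all `i > 0`,
`Ω^i(M) ⊆ J·P^{i-1}` and `Ω^i(M) ∩ J²·P^{i-1} = J·Ω^i(M)`, where `J = ⊕_{i ≥ 1} A_i`.
(Here `Ω^{i+1}(M)` is realized as the image of `d_i : P^{i+1} → P^i`.) -/
theorem stmt5
    {k A : Type*} [Field k] [Ring A] [Algebra k A]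
    (𝒜 : ℕ → Submodule k A) [GradedAlgebra 𝒜]
    (hlf : ∀ i, FiniteDimensional k (𝒜 i))
    (hgen : ∀ i, 𝒜 1 * 𝒜 i = 𝒜 (i + 1))
    -- the graded module `M`, generated in degree 0
    {M : Type*} [AddCommGroup M] [Module k M] [Module A M] [IsScalarTower k A M]
    (ℳ : ℕ → Submodule k M)
    (hMgr : iSup ℳ = ⊤ ∧ iSupIndep ℳ)
    (hMsmul : ∀ (i j : ℕ) (a : A) (x : M), a ∈ 𝒜 i → x ∈ ℳ j → a • x ∈ ℳ (i + j))
    (hMgen : Submodule.span A (ℳ 0 : Set M) = ⊤)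
    -- a minimal graded projective resolution `⋯ → P 1 → P 0 → M → 0`
    (P : ℕ → Type*) [∀ i, AddCommGroup (P i)] [∀ i, Module k (P i)]
    [∀ i, Module A (P i)] [∀ i, IsScalarTower k A (P i)]
    (Pgr : ∀ i, ℕ → Submodule k (P i))
    (hPgr : ∀ i, iSup (Pgr i) = ⊤ ∧ iSupIndep (Pgr i))
    (hPsmul : ∀ (i : ℕ) (n j : ℕ) (a : A) (x : P i), a ∈ 𝒜 n → x ∈ Pgr i j →
      a • x ∈ Pgr i (n + j))
    (hPproj : ∀ i, Module.Projective A (P i))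
    (ε : P 0 →ₗ[A] M) (d : ∀ i, P (i + 1) →ₗ[A] P i)
    (hεgr : ∀ (j : ℕ) (x : P 0), x ∈ Pgr 0 j → ε x ∈ ℳ j)
    (hdgr : ∀ (i j : ℕ) (x : P (i + 1)), x ∈ Pgr (i + 1) j → d i x ∈ Pgr i j)
    (hεsurj : Function.Surjective ε)
    (hexact0 : LinearMap.range (d 0) = LinearMap.ker ε)
    (hexact : ∀ i, LinearMap.range (d (i + 1)) = LinearMap.ker (d i))
    -- minimality: the kernels are superfluous submodules
    (hmin0 : ∀ N : Submodule A (P 0), N ⊔ LinearMap.ker ε = ⊤ → N = ⊤)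
    (hmin : ∀ (i : ℕ) (N : Submodule A (P (i + 1))), N ⊔ LinearMap.ker (d i) = ⊤ → N = ⊤) :
    -- `M` is Koszul, i.e. each `Ω^{i+1}(M) = range (d i)` is generated in degree `i+1`,
    (∀ i : ℕ, Submodule.span A
        ((LinearMap.range (d i) : Set (P i)) ∩ (Pgr i (i + 1) : Set (P i))) =
        LinearMap.range (d i)) ↔
    -- if and only if `Ω^{i+1}(M) ⊆ J·P^i` and `Ω^{i+1}(M) ∩ J²·P^i = J·Ω^{i+1}(M)`.
    (∀ i : ℕ,
      LinearMap.range (d i) ≤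
        (Submodule.span A (⋃ n : ℕ, (𝒜 (n + 1) : Set A)) : Ideal A) •
          (⊤ : Submodule A (P i)) ∧
      ((Submodule.span A (⋃ n : ℕ, (𝒜 (n + 1) : Set A)) : Ideal A) •
          ((Submodule.span A (⋃ n : ℕ, (𝒜 (n + 1) : Set A)) : Ideal A) •
            (⊤ : Submodule A (P i)))) ⊓ LinearMap.range (d i) =
        (Submodule.span A (⋃ n : ℕ, (𝒜 (n + 1) : Set A)) : Ideal A) •
          LinearMap.range (d i)) := by
  classical
  letI : DirectSum.Decomposition ℳ :=
    ((DirectSum.isInternal_submodule_iff_iSupIndep_and_iSup_eq_top ℳ).2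
      ⟨hMgr.2, hMgr.1⟩).chooseDecomposition
  letI decP : ∀ i, DirectSum.Decomposition (Pgr i) := fun i =>
    ((DirectSum.isInternal_submodule_iff_iSupIndep_and_iSup_eq_top (Pgr i)).2
      ⟨(hPgr i).2, (hPgr i).1⟩).chooseDecomposition
  have base : (⊤ : Submodule A (P 0)) = Submodule.span A (Pgr 0 0 : Set (P 0)) := by
    refine genStep 𝒜 ℳ hMsmul (Pgr 0) ε (fun t y hy => hεgr t y hy) 0 ?_ hmin0
    rw [LinearMap.range_eq_top_of_surjective ε hεsurj]
    rw [show ((⊤ : Submodule A M) : Set M) ∩ (ℳ 0 : Set M) = (ℳ 0 : Set M) by simp]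
    exact hMgen.symm
  have step : ∀ i : ℕ,
      Submodule.span A ((LinearMap.range (d i) : Set (P i)) ∩ (Pgr i (i + 1) : Set (P i))) =
        LinearMap.range (d i) →
      (⊤ : Submodule A (P (i + 1))) =
        Submodule.span A (Pgr (i + 1) (i + 1) : Set (P (i + 1))) := by
    intro i hK
    exact genStep 𝒜 (Pgr i) (hPsmul i) (Pgr (i + 1)) (d i)
      (fun t y hy => hdgr i t y hy) (i + 1) hK.symm (hmin i)
  have fwd : ∀ i : ℕ,
      (⊤ : Submodule A (P i)) = Submodule.span A (Pgr i i : Set (P i)) →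
      Submodule.span A ((LinearMap.range (d i) : Set (P i)) ∩ (Pgr i (i + 1) : Set (P i))) =
        LinearMap.range (d i) →
      (LinearMap.range (d i) ≤ Jid 𝒜 • (⊤ : Submodule A (P i)) ∧
        (Jid 𝒜 • (Jid 𝒜 • (⊤ : Submodule A (P i)))) ⊓ LinearMap.range (d i) =
          Jid 𝒜 • LinearMap.range (d i)) := by
    intro i Hi Ki
    have hB1 := B1 𝒜 (Pgr i) (hPsmul i) i Hi
    have hB2 := B2 𝒜 (Pgr i) (hPsmul i) hgen i Hi
    have ha : LinearMap.range (d i) ≤ Jid 𝒜 • (⊤ : Submodule A (P i)) := by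
      rw [hB1, ← Ki]
      refine Submodule.span_le.2 ?_
      rintro w ⟨hw1, hw2⟩
      exact mem_Umod (Pgr i) le_rfl hw2
    refine ⟨ha, le_antisymm ?_ (le_inf (Submodule.smul_le.2 fun r hr w hw => Submodule.smul_mem_smul hr (ha hw)) ?_)⟩
    · intro x hx
      rw [Submodule.mem_inf] at hx
      obtain ⟨hx1, hx2⟩ := hx
      rw [hB2] at hx1
      have h1 : x ∈ Submodule.span k
          (hmSet 𝒜 ((LinearMap.range (d i) : Set (P i)) ∩ (Pgr i (i + 1) : Set (P i)))) := by
        rw [← Ki, span_eq_hmMod 𝒜] at hx2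
        exact hx2
      have hhom : ∀ z ∈ hmSet 𝒜 ((LinearMap.range (d i) : Set (P i)) ∩
          (Pgr i (i + 1) : Set (P i))), ∃ dz, z ∈ Pgr i dz := by
        rintro z ⟨n, a, haz, w, hw, rfl⟩
        exact ⟨n + (i + 1), hPsmul i n (i + 1) a w haz hw.2⟩
      refine mem_of_proj (Pgr i)
        (Q := (Jid 𝒜 • LinearMap.range (d i)).restrictScalars k) ?_
      intro t
      rcases lt_or_ge t (i + 2) with h | h
      · rw [proj_Umod_zero 𝒜 (Pgr i) (hPsmul i) h hx1]
        exact zero_mem _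
      · have h2 := proj_mem_span (Pgr i) _ hhom h1 t
        refine Submodule.span_le.2 ?_ h2
        rintro z ⟨⟨n, a, haz, w, hw, rfl⟩, hzt⟩
        rcases eq_or_ne (a • w) 0 with h0 | h0
        · rw [h0]; exact zero_mem _
        · have hdeg := DirectSum.degree_eq_of_mem_mem (Pgr i)
            (hPsmul i n (i + 1) a w haz hw.2) hzt h0
          exact Submodule.smul_mem_smul (R := A) (mem_Jid 𝒜 (by omega) haz) hw.1
    · exact Submodule.smul_le.2 fun a _ w hw => Submodule.smul_mem _ a hw
  have bwd : ∀ i : ℕ,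
      (⊤ : Submodule A (P i)) = Submodule.span A (Pgr i i : Set (P i)) →
      LinearMap.range (d i) ≤ Jid 𝒜 • (⊤ : Submodule A (P i)) →
      (Jid 𝒜 • (Jid 𝒜 • (⊤ : Submodule A (P i)))) ⊓ LinearMap.range (d i) =
        Jid 𝒜 • LinearMap.range (d i) →
      Submodule.span A ((LinearMap.range (d i) : Set (P i)) ∩ (Pgr i (i + 1) : Set (P i))) =
        LinearMap.range (d i) := by
    intro i Hi hca hcb
    have hB1 := B1 𝒜 (Pgr i) (hPsmul i) i Hi
    have hB2 := B2 𝒜 (Pgr i) (hPsmul i) hgen i Hi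
    have hΩgr : ∀ x ∈ LinearMap.range (d i), ∀ t,
        ((DirectSum.decompose (Pgr i) x t : Pgr i t) : P i) ∈ LinearMap.range (d i) :=
      range_graded (Pgr i) (Pgr (i + 1)) (d i) (fun t y hy => hdgr i t y hy)
    set N : Submodule A (P i) :=
      Submodule.span A ((LinearMap.range (d i) : Set (P i)) ∩ (Pgr i (i + 1) : Set (P i)))
      with hNdef
    have hJΩ : Jid 𝒜 • LinearMap.range (d i) =
        hmModP 𝒜 {x : P i | x ∈ LinearMap.range (d i) ∧ ∃ dg, x ∈ Pgr i dg} :=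
      Jid_smul_eq 𝒜 (Pgr i) hΩgr
    have claim : ∀ t : ℕ, ∀ w, w ∈ LinearMap.range (d i) → w ∈ Pgr i t → w ∈ N := by
      intro t
      induction t using Nat.strong_induction_on with
      | _ t IH =>
        intro w hwΩ hwt
        rcases lt_or_ge t (i + 1) with hlt | hge1
        · have hU : w ∈ Umod (Pgr i) A (i + 1) := by
            rw [← hB1]; exact hca hwΩ
          have h0 := proj_Umod_zero 𝒜 (Pgr i) (hPsmul i) hlt hU
          rw [DirectSum.decompose_of_mem_same (Pgr i) hwt] at h0
          rw [h0]; exact zero_mem _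
        rcases eq_or_lt_of_le hge1 with heq | hgt
        · rw [← heq] at hwt
          exact Submodule.subset_span ⟨hwΩ, hwt⟩
        · have hw2 : w ∈ Jid 𝒜 • LinearMap.range (d i) := by
            rw [← hcb]
            refine Submodule.mem_inf.2 ⟨?_, hwΩ⟩
            rw [hB2]
            exact mem_Umod (Pgr i) (by omega) hwt
          rw [hJΩ] at hw2
          replace hw2 : w ∈ Submodule.span k
              (hmSetP 𝒜 {x : P i | x ∈ LinearMap.range (d i) ∧ ∃ dg, x ∈ Pgr i dg}) := hw2
          have hhom : ∀ z ∈ hmSetP 𝒜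
              {x : P i | x ∈ LinearMap.range (d i) ∧ ∃ dg, x ∈ Pgr i dg},
              ∃ dz, z ∈ Pgr i dz := by
            rintro z ⟨n, hn, a, haz, v, ⟨hv1, l, hvl⟩, rfl⟩
            exact ⟨n + l, hPsmul i n l a v haz hvl⟩
          have h2 := proj_mem_span (Pgr i) _ hhom hw2 t
          rw [DirectSum.decompose_of_mem_same (Pgr i) hwt] at h2
          have hfin : w ∈ N.restrictScalars k := by
            refine Submodule.span_le.2 ?_ h2
            rintro z ⟨⟨n, hn, a, haz, v, ⟨hv1, l, hvl⟩, rfl⟩, hzt⟩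
            rcases eq_or_ne (a • v) 0 with h0 | h0
            · rw [h0]; exact zero_mem _
            · have hdeg := DirectSum.degree_eq_of_mem_mem (Pgr i)
                (hPsmul i n l a v haz hvl) hzt h0
              exact Submodule.smul_mem _ a (IH l (by omega) v hv1 hvl)
          exact hfin
    refine le_antisymm (Submodule.span_le.2 fun w hw => hw.1) fun x hx => ?_
    refine mem_of_proj (Pgr i) (Q := N.restrictScalars k) fun t => ?_
    exact claim t _ (hΩgr x hx t) (DirectSum.decompose (Pgr i) x t).2
  constructor
  · intro hK
    have Hgen : ∀ i, (⊤ : Submodule A (P i)) = Submodule.span A (Pgr i i : Set (P i)) := by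
      intro i
      induction i with
      | zero => exact base
      | succ n ih => exact step n (hK n)
    exact fun i => fwd i (Hgen i) (hK i)
  · intro hC
    have Hgen : ∀ i, (⊤ : Submodule A (P i)) = Submodule.span A (Pgr i i : Set (P i)) := by
      intro i
      induction i with
      | zero => exact base
      | succ n ih => exact step n (bwd n ih (hC n).1 (hC n).2)
    exact fun i => bwd i (Hgen i) (hC i).1 (hC i).2
end

section
/- Let A be a positively graded, locally finite algebra generated in degrees 0 and 1 such that A is projective as an A_0-module and A_0 satisfies the splitting property (S). Then for a positively graded A-module M, the following are equivalent: (1) Ω^i(M) is a projective A_0-module for all i ≥ 0; (2) Ω^i(M)_i is a projective A_0-module for all i ≥ 0; (3) M is a projective A_0-module. -/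
universe w



section SES

variable {B : Type*} [Ring B] {X Pm Q : Type*}
  [AddCommGroup X] [AddCommGroup Pm] [AddCommGroup Q]
  [Module B X] [Module B Pm] [Module B Q]

/-- In a short exact sequence `0 → X → Pm → Q → 0` with `Pm` projective,
if `Q` is projective then so is `X`. -/
theorem ses_proj_sub (f : X →ₗ[B] Pm) (g : Pm →ₗ[B] Q) (hf : Function.Injective f)
    (hg : Function.Surjective g) (he : LinearMap.range f = LinearMap.ker g)
    (hP : Module.Projective B Pm) (hQ : Module.Projective B Q) :
    Module.Projective B X := by
  haveI := hP; haveI := hQ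
  obtain ⟨s, hs⟩ := Module.projective_lifting_property g (LinearMap.id (M := Q)) hg
  set t : Pm →ₗ[B] Pm := LinearMap.id - s ∘ₗ g with ht
  have htmem : ∀ x, t x ∈ LinearMap.range f := by
    intro x
    rw [he, LinearMap.mem_ker]
    have h1 := LinearMap.congr_fun hs (g x)
    simp only [ht, LinearMap.sub_apply, LinearMap.id_apply, LinearMap.coe_comp,
      Function.comp_apply, map_sub]
    simp only [LinearMap.coe_comp, Function.comp_apply, LinearMap.id_apply] at h1
    rw [h1, sub_self]
  let e := LinearEquiv.ofInjective f hf
  let r : Pm →ₗ[B] X := e.symm.toLinearMap ∘ₗ (t.codRestrict (LinearMap.range f) htmem)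
  have hr : r ∘ₗ f = LinearMap.id := by
    ext x
    have h2 : t (f x) = f x := by
      have h3 : g (f x) = 0 := by
        rw [← LinearMap.mem_ker, ← he]; exact LinearMap.mem_range_self f x
      simp only [ht, LinearMap.sub_apply, LinearMap.id_apply, LinearMap.coe_comp,
        Function.comp_apply, h3, map_zero, sub_zero]
    simp only [r, LinearMap.coe_comp, Function.comp_apply, LinearMap.codRestrict_apply,
      LinearMap.id_apply, LinearEquiv.coe_coe]
    rw [LinearEquiv.symm_apply_eq]
    exact Subtype.ext (by simp [e, h2])
  exact Module.Projective.of_split f r hr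

/-- In a short exact sequence `0 → X → Pm → Q → 0` with `Pm` projective,
if `X` is projective and the inclusion splits, then `Q` is projective. -/
theorem ses_proj_quot (f : X →ₗ[B] Pm) (g : Pm →ₗ[B] Q)
    (hg : Function.Surjective g) (he : LinearMap.range f = LinearMap.ker g)
    (hP : Module.Projective B Pm)
    (hspl : ∃ r : Pm →ₗ[B] X, r ∘ₗ f = LinearMap.id) :
    Module.Projective B Q := by
  haveI := hP
  obtain ⟨r, hrr⟩ := hspl
  have hrf : ∀ y, r (f y) = y := fun y => LinearMap.congr_fun hrr y
  set u : Pm →ₗ[B] Pm := LinearMap.id - f ∘ₗ r with hu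
  have hgu : ∀ x, g (u x) = g x := by
    intro x
    have h0 : g (f (r x)) = 0 := by
      rw [← LinearMap.mem_ker, ← he]; exact LinearMap.mem_range_self f (r x)
    simp [hu, h0]
  have humem : ∀ x, u x ∈ LinearMap.ker r := by
    intro x
    simp [hu, hrf]
  -- ker r is a direct summand of Pm, hence projective
  have hker : Module.Projective B ↥(LinearMap.ker r) := by
    refine Module.Projective.of_split (LinearMap.ker r).subtype
      (u.codRestrict (LinearMap.ker r) humem) ?_
    ext ⟨x, hx⟩
    simp [hu, LinearMap.mem_ker.mp hx]
  -- g restricted to ker r is bijective onto Q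
  let g' : ↥(LinearMap.ker r) →ₗ[B] Q := g ∘ₗ (LinearMap.ker r).subtype
  have hg'bij : Function.Bijective g' := by
    constructor
    · intro ⟨x, hx⟩ ⟨y, hy⟩ hxy
      simp only [g', LinearMap.coe_comp, Function.comp_apply, Submodule.coe_subtype] at hxy
      have : x - y ∈ LinearMap.ker g := by simp [LinearMap.mem_ker, map_sub, hxy]
      rw [← he] at this
      obtain ⟨z, hz⟩ := this
      have hz0 : z = 0 := by
        have := hrf z
        rw [hz] at this
        simp only [map_sub, LinearMap.mem_ker.mp hx, LinearMap.mem_ker.mp hy, sub_self] at this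
        exact this.symm
      apply Subtype.ext
      have hxy0 : x - y = 0 := by rw [← hz, hz0, map_zero]
      exact sub_eq_zero.mp hxy0
    · intro y
      obtain ⟨x, rfl⟩ := hg y
      exact ⟨⟨u x, humem x⟩, hgu x⟩
  haveI := hker
  exact Module.Projective.of_equiv (LinearEquiv.ofBijective g' hg'bij)

end SES

section Decomp

variable {k B M : Type*} [Semiring k] [Ring B] [AddCommGroup M] [Module k M] [Module B M]

/-- Turn a `k`-submodule stable under the `B`-action into a `B`-submodule. -/
def toBMod (N : Submodule k M) (h : ∀ (b : B) (x : M), x ∈ N → b • x ∈ N) :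
    Submodule B M where
  carrier := N
  add_mem' := fun ha hb => N.add_mem ha hb
  zero_mem' := N.zero_mem
  smul_mem' := fun b x hx => h b x hx

@[simp] lemma mem_toBMod {N : Submodule k M} {h} {x : M} :
    x ∈ toBMod (B := B) N h ↔ x ∈ N := Iff.rfl

lemma iSup_stable {ι : Sort*} (𝒩 : ι → Submodule k M)
    (hst : ∀ i (b : B) (x : M), x ∈ 𝒩 i → b • x ∈ 𝒩 i) (b : B) {x : M}
    (hx : x ∈ iSup 𝒩) : b • x ∈ iSup 𝒩 := by
  refine Submodule.iSup_induction (motive := fun y => b • y ∈ iSup 𝒩) 𝒩 hx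
    (fun i y hy => Submodule.mem_iSup_of_mem i (hst i b y hy))
    (by simpa using Submodule.zero_mem _)
    (fun y z hy hz => by show b • (y + z) ∈ _; rw [smul_add]; exact Submodule.add_mem _ hy hz)

lemma iSup_toBMod_top {ι : Type*} (𝒩 : ι → Submodule k M)
    (hst : ∀ i (b : B) (x : M), x ∈ 𝒩 i → b • x ∈ 𝒩 i)
    (htop : iSup 𝒩 = ⊤) : iSup (fun i => toBMod (𝒩 i) (hst i)) = ⊤ := by
  rw [eq_top_iff]
  intro x _
  have hx : x ∈ iSup 𝒩 := htop ▸ Submodule.mem_top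
  exact Submodule.iSup_induction (motive := fun y => y ∈ iSup fun i => toBMod (𝒩 i) (hst i)) 𝒩 hx
    (fun i y hy => Submodule.mem_iSup_of_mem i hy) (Submodule.zero_mem _)
    (fun y z hy hz => Submodule.add_mem _ hy hz)

lemma iSupIndep_toBMod {ι : Type*} (𝒩 : ι → Submodule k M)
    (hst : ∀ i (b : B) (x : M), x ∈ 𝒩 i → b • x ∈ 𝒩 i)
    (hind : iSupIndep 𝒩) : iSupIndep (fun i => toBMod (𝒩 i) (hst i)) := by
  intro i
  rw [Submodule.disjoint_def]
  intro x hx hx'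
  set N' : Submodule k M := ⨆ j, ⨆ (_ : j ≠ i), 𝒩 j with hN'
  have hN'st : ∀ (b : B) (y : M), y ∈ N' → b • y ∈ N' := by
    intro b y hy
    exact iSup_stable (fun j => ⨆ (_ : j ≠ i), 𝒩 j)
      (fun j b' y' hy' =>
        iSup_stable (ι := j ≠ i) (fun _ => 𝒩 j) (fun _ => hst j) b' hy') b hy
  have hsub : (⨆ j, ⨆ (_ : j ≠ i), toBMod (𝒩 j) (hst j)) ≤ toBMod N' hN'st := by
    refine iSup_le fun j => iSup_le fun hj => ?_
    intro y hy
    exact Submodule.mem_iSup_of_mem j (Submodule.mem_iSup_of_mem hj hy)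
  exact Submodule.disjoint_def.mp (hind i) x hx (hsub hx')

end Decomp

section Proj

variable {B : Type*} [Ring B]

/-- Projection onto a component of an internal direct sum decomposition. -/
noncomputable def projMap {M : Type*} [AddCommGroup M] [Module B M]
    {ι : Type*} [DecidableEq ι] (C : ι → Submodule B M)
    (h : DirectSum.IsInternal C) (j : ι) : M →ₗ[B] ↥(C j) :=
  (DirectSum.component B ι (fun i => ↥(C i)) j) ∘ₗ
    (LinearEquiv.ofBijective (DirectSum.coeLinearMap C) h).symm.toLinearMap

lemma projMap_of_mem {M : Type*} [AddCommGroup M] [Module B M]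
    {ι : Type*} [DecidableEq ι] {C : ι → Submodule B M}
    (h : DirectSum.IsInternal C) {j : ι} {x : M} (hx : x ∈ C j) :
    projMap C h j x = ⟨x, hx⟩ := by
  have := h.ofBijective_coeLinearMap_of_mem hx
  exact this

lemma projMap_of_mem_ne {M : Type*} [AddCommGroup M] [Module B M]
    {ι : Type*} [DecidableEq ι] {C : ι → Submodule B M}
    (h : DirectSum.IsInternal C) {m j : ι} (hmj : m ≠ j) {x : M} (hx : x ∈ C m) :
    projMap C h j x = 0 := by
  have := h.ofBijective_coeLinearMap_of_mem_ne hmj hx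
  exact this

lemma projective_component {M : Type*} [AddCommGroup M] [Module B M]
    {ι : Type*} [DecidableEq ι] {C : ι → Submodule B M}
    (h : DirectSum.IsInternal C) (hM : Module.Projective B M) (j : ι) :
    Module.Projective B ↥(C j) := by
  haveI := hM
  refine Module.Projective.of_split (C j).subtype (projMap C h j) ?_
  ext x
  exact congrArg Subtype.val (projMap_of_mem h x.2)

lemma projective_of_components {M : Type*} [AddCommGroup M] [Module B M]
    {ι : Type*} [DecidableEq ι] {C : ι → Submodule B M}
    (h : DirectSum.IsInternal C) (hC : ∀ j, Module.Projective B ↥(C j)) :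
    Module.Projective B M := by
  haveI := hC
  haveI : Module.Projective B (DirectSum ι fun j => ↥(C j)) :=
    inferInstanceAs (Module.Projective B (Π₀ j, ↥(C j)))
  exact Module.Projective.of_equiv (LinearEquiv.ofBijective (DirectSum.coeLinearMap C) h)

lemma projMap_comm {M₁ M₂ : Type*} [AddCommGroup M₁] [AddCommGroup M₂]
    [Module B M₁] [Module B M₂] {ι : Type*} [DecidableEq ι]
    {C₁ : ι → Submodule B M₁} {C₂ : ι → Submodule B M₂}
    (h₁ : DirectSum.IsInternal C₁) (h₂ : DirectSum.IsInternal C₂)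
    (φ : M₁ →ₗ[B] M₂) (hφ : ∀ j x, x ∈ C₁ j → φ x ∈ C₂ j) (j : ι) (x : M₁) :
    φ ((projMap C₁ h₁ j x : M₁)) = (projMap C₂ h₂ j (φ x) : M₂) := by
  set L : M₁ →ₗ[B] M₂ := φ ∘ₗ (C₁ j).subtype ∘ₗ projMap C₁ h₁ j with hL
  set R : M₁ →ₗ[B] M₂ := (C₂ j).subtype ∘ₗ (projMap C₂ h₂ j) ∘ₗ φ with hR
  have hLR : L = R := by
    have htop : iSup C₁ = ⊤ := h₁.submodule_iSup_eq_top
    have hle : iSup C₁ ≤ LinearMap.eqLocus L R := by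
      refine iSup_le fun m => ?_
      intro y hy
      rw [LinearMap.mem_eqLocus]
      by_cases hmj : m = j
      · subst hmj
        simp only [hL, hR, LinearMap.coe_comp, Function.comp_apply, Submodule.coe_subtype]
        rw [projMap_of_mem h₁ hy, projMap_of_mem h₂ (hφ m y hy)]
      · simp only [hL, hR, LinearMap.coe_comp, Function.comp_apply, Submodule.coe_subtype]
        rw [projMap_of_mem_ne h₁ hmj hy, projMap_of_mem_ne h₂ hmj (hφ m y hy)]
        simp
    ext z
    have : z ∈ LinearMap.eqLocus L R := hle (htop ▸ Submodule.mem_top)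
    exact this
  exact LinearMap.congr_fun hLR x

lemma exists_homog_preimage {M₁ M₂ : Type*} [AddCommGroup M₁] [AddCommGroup M₂]
    [Module B M₁] [Module B M₂] {ι : Type*} [DecidableEq ι]
    {C₁ : ι → Submodule B M₁} {C₂ : ι → Submodule B M₂}
    (h₁ : DirectSum.IsInternal C₁) (h₂ : DirectSum.IsInternal C₂)
    (φ : M₁ →ₗ[B] M₂) (hφ : ∀ j x, x ∈ C₁ j → φ x ∈ C₂ j) {j : ι} {y : M₂}
    (hy : y ∈ C₂ j) {x : M₁} (hxy : φ x = y) :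
    ∃ x' : M₁, x' ∈ C₁ j ∧ φ x' = y := by
  refine ⟨(projMap C₁ h₁ j x : M₁), (projMap C₁ h₁ j x).2, ?_⟩
  rw [projMap_comm h₁ h₂ φ hφ j x, hxy, projMap_of_mem h₂ hy]

/-- Transitivity of projectivity along a scalar tower. -/
theorem projective_trans {R S N : Type*} [Ring R] [Ring S] [AddCommGroup N]
    [Module R S] [IsScalarTower R S S] [Module S N] [Module R N] [IsScalarTower R S N]
    (h1 : Module.Projective R S) (h2 : Module.Projective S N) : Module.Projective R N := by
  classical
  obtain ⟨s, hs⟩ := Module.projective_def.mp h2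
  haveI := h1
  haveI : Module.Projective R (N →₀ S) :=
    Module.Projective.of_equiv (finsuppLequivDFinsupp (M := S) (ι := N) R).symm
  exact Module.Projective.of_split (s.restrictScalars R)
    ((Finsupp.linearCombination S id).restrictScalars R)
    (LinearMap.ext fun x => hs x)

end Proj

set_option maxHeartbeats 2000000

/-- Let `A` be a positively graded, locally finite algebra generated in
degrees 0 and 1 such that `A` is projective as an `A₀`-module and `A₀` satisfies the
splitting property (S).  Then for a positively graded `A`-module `M` (with a minimal
graded projective resolution realizing its syzygies `Ω^i(M)`), the following are
equivalent: (1) every `Ω^i(M)` is a projective `A₀`-module; (2) every degree-`i` part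
`Ω^i(M)_i` is a projective `A₀`-module; (3) `M` is a projective `A₀`-module. -/
theorem stmt9
    {k A : Type} [Field k] [Ring A] [Algebra k A]
    (𝒜 : ℕ → Submodule k A) [GradedAlgebra 𝒜]
    (hlf : ∀ i, FiniteDimensional k (𝒜 i))
    (hgen : ∀ i, 𝒜 1 * 𝒜 i = 𝒜 (i + 1))
    -- the degree-0 part, as a subalgebra
    (A₀ : Subalgebra k A) (hA₀ : A₀.toSubmodule = 𝒜 0)
    -- `A` is a projective `A₀`-module
    (hAproj : Module.Projective A₀ A)
    -- the splitting property (S)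
    (hS : ∀ (X Y : Type w) [AddCommGroup X] [AddCommGroup Y]
      [Module A₀ X] [Module A₀ Y] (f : X →ₗ[A₀] Y),
      Module.Projective A₀ X → Module.Projective A₀ Y → Function.Injective f →
      ∃ g : Y →ₗ[A₀] X, g.comp f = LinearMap.id)
    -- a positively graded `A`-module `M`
    {M : Type} [AddCommGroup M] [Module k M] [Module A M] [IsScalarTower k A M]
    (ℳ : ℕ → Submodule k M)
    (hMgr : iSup ℳ = ⊤ ∧ iSupIndep ℳ)
    (hMsmul : ∀ (i j : ℕ) (a : A) (x : M), a ∈ 𝒜 i → x ∈ ℳ j → a • x ∈ ℳ (i + j))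
    -- a minimal graded projective resolution `⋯ → P 1 → P 0 → M → 0`
    (P : ℕ → Type) [∀ i, AddCommGroup (P i)] [∀ i, Module k (P i)]
    [∀ i, Module A (P i)] [∀ i, IsScalarTower k A (P i)]
    (Pgr : ∀ i, ℕ → Submodule k (P i))
    (hPgr : ∀ i, iSup (Pgr i) = ⊤ ∧ iSupIndep (Pgr i))
    (hPsmul : ∀ (i : ℕ) (n j : ℕ) (a : A) (x : P i), a ∈ 𝒜 n → x ∈ Pgr i j →
      a • x ∈ Pgr i (n + j))
    (hPproj : ∀ i, Module.Projective A (P i))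
    (ε : P 0 →ₗ[A] M) (d : ∀ i, P (i + 1) →ₗ[A] P i)
    (hεgr : ∀ (j : ℕ) (x : P 0), x ∈ Pgr 0 j → ε x ∈ ℳ j)
    (hdgr : ∀ (i j : ℕ) (x : P (i + 1)), x ∈ Pgr (i + 1) j → d i x ∈ Pgr i j)
    (hεsurj : Function.Surjective ε)
    (hexact0 : LinearMap.range (d 0) = LinearMap.ker ε)
    (hexact : ∀ i, LinearMap.range (d (i + 1)) = LinearMap.ker (d i))
    (hmin0 : ∀ N : Submodule A (P 0), N ⊔ LinearMap.ker ε = ⊤ → N = ⊤)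
    (hmin : ∀ (i : ℕ) (N : Submodule A (P (i + 1))), N ⊔ LinearMap.ker (d i) = ⊤ → N = ⊤)
    -- the degree-`i` parts `Ω^i(M)_i` of the syzygies, as `A₀`-modules:
    -- `Ω^0(M)_0 = M_0` and `Ω^{i+1}(M)_{i+1} = (range dᵢ) ∩ (P i)_{i+1}`
    (M₀' : Submodule A₀ M) (hM₀' : (M₀' : Set M) = (ℳ 0 : Set M))
    (Ω' : ∀ i, Submodule A₀ (P i))
    (hΩ' : ∀ i, (Ω' i : Set (P i)) =
      (LinearMap.range (d i) : Set (P i)) ∩ (Pgr i (i + 1) : Set (P i))) :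
    -- (1) ↔ (3) and (2) ↔ (3)
    ((Module.Projective A₀ M ∧ ∀ i, Module.Projective A₀ ↥(LinearMap.range (d i))) ↔
        Module.Projective A₀ M) ∧
    ((Module.Projective A₀ ↥M₀' ∧ ∀ i, Module.Projective A₀ ↥(Ω' i)) ↔
        Module.Projective A₀ M) := by
  classical
  -- basic facts about the `A₀`-action
  have hA0mem : ∀ b : A₀, (b : A) ∈ 𝒜 0 := fun b => by rw [← hA₀]; exact b.2
  have hMst : ∀ j (b : A₀) (x : M), x ∈ ℳ j → b • x ∈ ℳ j := by
    intro j b x hx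
    have h := hMsmul 0 j (b : A) x (hA0mem b) hx
    rwa [zero_add] at h
  have hPst : ∀ i j (b : A₀) (x : P i), x ∈ Pgr i j → b • x ∈ Pgr i j := by
    intro i j b x hx
    have h := hPsmul i 0 j (b : A) x (hA0mem b) hx
    rwa [zero_add] at h
  -- the graded components as `A₀`-submodules
  set CM : ℕ → Submodule A₀ M := fun j => toBMod (ℳ j) (hMst j) with hCMdef
  set CP : ∀ i, ℕ → Submodule A₀ (P i) := fun i j => toBMod (Pgr i j) (hPst i j) with hCPdef
  have hMint : DirectSum.IsInternal CM :=
    DirectSum.isInternal_submodule_of_iSupIndep_of_iSup_eq_top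
      (iSupIndep_toBMod ℳ hMst hMgr.2) (iSup_toBMod_top ℳ hMst hMgr.1)
  have hPint : ∀ i, DirectSum.IsInternal (CP i) := fun i =>
    DirectSum.isInternal_submodule_of_iSupIndep_of_iSup_eq_top
      (iSupIndep_toBMod (Pgr i) (hPst i) (hPgr i).2) (iSup_toBMod_top (Pgr i) (hPst i) (hPgr i).1)
  -- `P i` and its components are projective over `A₀`
  have hPA0 : ∀ i, Module.Projective A₀ (P i) := fun i => projective_trans hAproj (hPproj i)
  have hCP : ∀ i j, Module.Projective A₀ ↥(CP i j) := fun i j =>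
    projective_component (hPint i) (hPA0 i) j
  -- the graded components of the syzygies, as `A₀`-submodules
  have hOst : ∀ i j (b : A₀) (x : P i),
      x ∈ (LinearMap.range (d i)).restrictScalars k ⊓ Pgr i j →
      b • x ∈ (LinearMap.range (d i)).restrictScalars k ⊓ Pgr i j := by
    intro i j b x hx
    obtain ⟨h1, h2⟩ := Submodule.mem_inf.mp hx
    refine Submodule.mem_inf.mpr ⟨?_, hPst i j b x h2⟩
    rw [Submodule.restrictScalars_mem] at h1 ⊢
    exact (LinearMap.range (d i)).smul_mem (b : A) h1
  set OC : ∀ i, ℕ → Submodule A₀ (P i) := fun i j => toBMod _ (hOst i j) with hOCdef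
  have hOmem : ∀ i j (x : P i),
      x ∈ OC i j ↔ x ∈ LinearMap.range (d i) ∧ x ∈ Pgr i j := by
    intro i j x
    constructor
    · intro hx
      obtain ⟨h1, h2⟩ := Submodule.mem_inf.mp hx
      exact ⟨Submodule.restrictScalars_mem k _ x |>.mp h1, h2⟩
    · intro ⟨h1, h2⟩
      exact Submodule.mem_inf.mpr ⟨(Submodule.restrictScalars_mem k _ x).mpr h1, h2⟩
  -- restricted-scalar versions of the maps
  set εA : P 0 →ₗ[A₀] M := ε.restrictScalars A₀ with hεA
  set dA : ∀ i, P (i + 1) →ₗ[A₀] P i := fun i => (d i).restrictScalars A₀ with hdA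
  have hεst : ∀ j (x : P 0), x ∈ CP 0 j → εA x ∈ CM j := fun j x hx => hεgr j x hx
  have hdst : ∀ i j (x : P (i + 1)), x ∈ CP (i + 1) j → dA i x ∈ CP i j :=
    fun i j x hx => hdgr i j x hx
  -- universe-adjusted splitting property
  have hS0 : ∀ (X Y : Type) [AddCommGroup X] [AddCommGroup Y]
      [Module A₀ X] [Module A₀ Y] (f : X →ₗ[A₀] Y),
      Module.Projective A₀ X → Module.Projective A₀ Y → Function.Injective f →
      ∃ g : Y →ₗ[A₀] X, g ∘ₗ f = LinearMap.id := by
    intro X Y _ _ _ _ f hX hY hf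
    let eX : ULift.{w} X ≃ₗ[A₀] X := ULift.moduleEquiv
    let eY : ULift.{w} Y ≃ₗ[A₀] Y := ULift.moduleEquiv
    obtain ⟨g', hg'⟩ := hS (ULift.{w} X) (ULift.{w} Y)
      (eY.symm.toLinearMap ∘ₗ f ∘ₗ eX.toLinearMap)
      (Module.Projective.of_equiv eX.symm) (Module.Projective.of_equiv eY.symm)
      (by
        intro a b hab
        simp only [LinearMap.coe_comp, Function.comp_apply, LinearEquiv.coe_coe] at hab
        have := hf (eY.symm.injective hab)
        exact eX.injective this)
    refine ⟨eX.toLinearMap ∘ₗ g' ∘ₗ eY.symm.toLinearMap, ?_⟩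
    ext x
    have h := LinearMap.congr_fun hg' (eX.symm x)
    simp only [LinearMap.coe_comp, Function.comp_apply, LinearEquiv.coe_coe,
      LinearEquiv.apply_symm_apply, LinearMap.id_apply] at h ⊢
    rw [h]
    simp
  -- the degree-`j` short exact sequence at level 0:
  -- `0 → (Ω¹)_j → (P 0)_j → M_j → 0`
  have hO0le : ∀ j, OC 0 j ≤ CP 0 j := fun j x hx => (Submodule.mem_inf.mp hx).2
  have hg0mem : ∀ j, ∀ x ∈ CP 0 j, εA x ∈ CM j := fun j x hx => hεgr j x hx
  set f0 : ∀ j, ↥(OC 0 j) →ₗ[A₀] ↥(CP 0 j) := fun j => Submodule.inclusion (hO0le j) with hf0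
  set g0 : ∀ j, ↥(CP 0 j) →ₗ[A₀] ↥(CM j) := fun j => εA.restrict (hg0mem j) with hg0
  have hg0surj : ∀ j, Function.Surjective (g0 j) := by
    rintro j ⟨y, hy⟩
    obtain ⟨x, hx⟩ := hεsurj y
    obtain ⟨x', hx'mem, hx'⟩ := exists_homog_preimage (hPint 0) hMint εA hεst (j := j) hy hx
    exact ⟨⟨x', hx'mem⟩, Subtype.ext hx'⟩
  have he0 : ∀ j, LinearMap.range (f0 j) = LinearMap.ker (g0 j) := by
    intro j
    ext x
    simp only [LinearMap.mem_range, LinearMap.mem_ker]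
    constructor
    · rintro ⟨y, rfl⟩
      apply Subtype.ext
      show ε ((y : P 0) : P 0) = 0
      have h1 := (Submodule.mem_inf.mp y.2).1
      rw [Submodule.restrictScalars_mem, hexact0, LinearMap.mem_ker] at h1
      exact h1
    · intro h
      have hε0 : ε (x : P 0) = 0 := Subtype.ext_iff.mp h
      refine ⟨⟨(x : P 0), ?_⟩, Subtype.ext rfl⟩
      exact (hOmem 0 j _).mpr ⟨hexact0 ▸ LinearMap.mem_ker.mpr hε0, x.2⟩
  -- the degree-`j` short exact sequence at level `i + 1`:
  -- `0 → (Ω^{i+2})_j → (P (i+1))_j → (Ω^{i+1})_j → 0`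
  have hOile : ∀ i j, OC (i + 1) j ≤ CP (i + 1) j := fun i j x hx => (Submodule.mem_inf.mp hx).2
  have hgSmem : ∀ i j, ∀ x ∈ CP (i + 1) j, dA i x ∈ OC i j := by
    intro i j x hx
    exact (hOmem i j _).mpr ⟨LinearMap.mem_range_self (d i) x, hdgr i j x hx⟩
  set fS : ∀ i j, ↥(OC (i + 1) j) →ₗ[A₀] ↥(CP (i + 1) j) :=
    fun i j => Submodule.inclusion (hOile i j) with hfS
  set gS : ∀ i j, ↥(CP (i + 1) j) →ₗ[A₀] ↥(OC i j) :=
    fun i j => (dA i).restrict (hgSmem i j) with hgS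
  have hgSsurj : ∀ i j, Function.Surjective (gS i j) := by
    rintro i j ⟨y, hy⟩
    obtain ⟨hy1, hy2⟩ := (hOmem i j y).mp hy
    obtain ⟨x, hx⟩ := hy1
    obtain ⟨x', hx'mem, hx'⟩ :=
      exists_homog_preimage (hPint (i + 1)) (hPint i) (dA i) (hdst i) (j := j) hy2 hx
    exact ⟨⟨x', hx'mem⟩, Subtype.ext hx'⟩
  have heS : ∀ i j, LinearMap.range (fS i j) = LinearMap.ker (gS i j) := by
    intro i j
    ext x
    simp only [LinearMap.mem_range, LinearMap.mem_ker]
    constructor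
    · rintro ⟨y, rfl⟩
      apply Subtype.ext
      show d i ((y : P (i + 1)) : P (i + 1)) = 0
      have h1 := ((hOmem (i + 1) j (y : P (i + 1))).mp y.2).1
      rw [hexact i, LinearMap.mem_ker] at h1
      exact h1
    · intro h
      have hd0 : d i (x : P (i + 1)) = 0 := Subtype.ext_iff.mp h
      refine ⟨⟨(x : P (i + 1)), ?_⟩, Subtype.ext rfl⟩
      exact (hOmem (i + 1) j _).mpr ⟨(hexact i) ▸ LinearMap.mem_ker.mpr hd0, x.2⟩
  -- the up/down steps
  have stepUp0 : ∀ j, Module.Projective A₀ ↥(CM j) → Module.Projective A₀ ↥(OC 0 j) :=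
    fun j h => ses_proj_sub (f0 j) (g0 j) (Submodule.inclusion_injective _)
      (hg0surj j) (he0 j) (hCP 0 j) h
  have stepUp : ∀ i j, Module.Projective A₀ ↥(OC i j) → Module.Projective A₀ ↥(OC (i + 1) j) :=
    fun i j h => ses_proj_sub (fS i j) (gS i j) (Submodule.inclusion_injective _)
      (hgSsurj i j) (heS i j) (hCP (i + 1) j) h
  have stepDn0 : ∀ j, Module.Projective A₀ ↥(OC 0 j) → Module.Projective A₀ ↥(CM j) :=
    fun j h => ses_proj_quot (f0 j) (g0 j) (hg0surj j) (he0 j) (hCP 0 j)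
      (hS0 _ _ (f0 j) h (hCP 0 j) (Submodule.inclusion_injective _))
  have stepDn : ∀ i j, Module.Projective A₀ ↥(OC (i + 1) j) → Module.Projective A₀ ↥(OC i j) :=
    fun i j h => ses_proj_quot (fS i j) (gS i j) (hgSsurj i j) (heS i j) (hCP (i + 1) j)
      (hS0 _ _ (fS i j) h (hCP (i + 1) j) (Submodule.inclusion_injective _))
  -- identifications with the given submodules
  have hMeq : M₀' = CM 0 := SetLike.ext' (by rw [hM₀']; rfl)
  have hΩeq : ∀ i, Ω' i = OC i (i + 1) := by
    intro i
    refine SetLike.ext' ?_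
    rw [hΩ' i]
    rfl
  -- (3) → (1) : module-level induction
  have h31 : Module.Projective A₀ M → ∀ i, Module.Projective A₀ ↥(LinearMap.range (d i)) := by
    intro h i
    induction i with
    | zero =>
      refine ses_proj_sub (((LinearMap.range (d 0)).subtype).restrictScalars A₀) εA
        (Subtype.val_injective) hεsurj ?_ (hPA0 0) h
      ext x
      simp only [LinearMap.mem_range, LinearMap.mem_ker]
      constructor
      · rintro ⟨y, rfl⟩
        show ε ((y : P 0) : P 0) = 0
        exact LinearMap.mem_ker.mp (hexact0.le y.2)
      · intro hx
        exact ⟨⟨x, hexact0.ge (LinearMap.mem_ker.mpr hx)⟩, rfl⟩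
    | succ n ih =>
      refine ses_proj_sub (((LinearMap.range (d (n + 1))).subtype).restrictScalars A₀)
        (((d n).rangeRestrict).restrictScalars A₀)
        (Subtype.val_injective) (LinearMap.surjective_rangeRestrict (d n)) ?_ (hPA0 (n + 1)) ih
      ext x
      simp only [LinearMap.mem_range, LinearMap.mem_ker]
      constructor
      · rintro ⟨y, rfl⟩
        apply Subtype.ext
        show d n ((y : P (n + 1)) : P (n + 1)) = 0
        exact LinearMap.mem_ker.mp ((hexact n).le y.2)
      · intro hx
        have hd0 : d n x = 0 := Subtype.ext_iff.mp hx
        exact ⟨⟨x, (hexact n).ge (LinearMap.mem_ker.mpr hd0)⟩, rfl⟩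
  -- (2) → (3)
  have h23 : (Module.Projective A₀ ↥M₀' ∧ ∀ i, Module.Projective A₀ ↥(Ω' i)) →
      Module.Projective A₀ M := by
    rintro ⟨h0, hd⟩
    have hCM0 : Module.Projective A₀ ↥(CM 0) := hMeq ▸ h0
    have hdiag : ∀ i, Module.Projective A₀ ↥(OC i (i + 1)) := fun i => (hΩeq i) ▸ hd i
    have hdn : ∀ i j, Module.Projective A₀ ↥(OC i j) → Module.Projective A₀ ↥(OC 0 j) := by
      intro i
      induction i with
      | zero => exact fun j h => h
      | succ n ih => exact fun j h => ih j (stepDn n j h)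
    refine projective_of_components hMint ?_
    intro j
    cases j with
    | zero => exact hCM0
    | succ m => exact stepDn0 (m + 1) (hdn m (m + 1) (hdiag m))
  -- (3) → (2)
  have h32 : Module.Projective A₀ M →
      (Module.Projective A₀ ↥M₀' ∧ ∀ i, Module.Projective A₀ ↥(Ω' i)) := by
    intro h
    have hCMall : ∀ j, Module.Projective A₀ ↥(CM j) := fun j => projective_component hMint h j
    have hup : ∀ i j, Module.Projective A₀ ↥(OC 0 j) → Module.Projective A₀ ↥(OC i j) := by
      intro i
      induction i with
      | zero => exact fun j h' => h'
      | succ n ih => exact fun j h' => stepUp n j (ih j h')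
    constructor
    · exact hMeq.symm ▸ hCMall 0
    · intro i
      exact (hΩeq i).symm ▸ hup i (i + 1) (stepUp0 (i + 1) (hCMall (i + 1)))
  exact ⟨⟨fun h => h.1, fun h => ⟨h, h31 h⟩⟩, ⟨h23, h32⟩⟩
end

section
/- Let A = ⊕_{i≥0} A_i be a positively graded, locally finite algebra generated in degrees 0 and 1, let 𝔯 be the Jacobson radical of A_0, and let ℜ = A𝔯A be the two-sided ideal generated by 𝔯. Then the degree-s component satisfies ℜ_s = Σ_{i=0}^{s} A_i 𝔯 A_{s-i} = ((𝔯 + J)^{s+1})_s, where J = ⊕_{i≥1} A_i. -/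
open DirectSum

/-- Key lemma: if `N d ≤ 𝒜 d` for all `d`, then `(⨆ d, N d) ⊓ 𝒜 s = N s`. -/
lemma stmt14_key {k A : Type*} [Field k] [Ring A] [Algebra k A]
    (𝒜 : ℕ → Submodule k A) [GradedAlgebra 𝒜]
    (N : ℕ → Submodule k A) (hN : ∀ d, N d ≤ 𝒜 d) (s : ℕ) :
    (⨆ d, N d) ⊓ 𝒜 s = N s := by
  refine le_antisymm ?_ (le_inf (le_iSup N s) (hN s))
  rintro x ⟨hx1, hx2⟩
  set π : A →ₗ[k] A :=
    (𝒜 s).subtype ∘ₗ (DirectSum.component k ℕ (fun i => 𝒜 i) s) ∘ₗ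
      (decomposeLinearEquiv 𝒜).toLinearMap with hπ
  have hfix : ∀ y, y ∈ 𝒜 s → π y = y := fun y hy => by
    simp only [hπ, DirectSum.component, LinearMap.coe_comp, Function.comp_apply,
      LinearEquiv.coe_coe, decomposeLinearEquiv_apply, Submodule.coe_subtype]
    exact decompose_of_mem_same 𝒜 hy
  have hzero : ∀ d y, d ≠ s → y ∈ 𝒜 d → π y = 0 := fun d y hd hy => by
    simp only [hπ, DirectSum.component, LinearMap.coe_comp, Function.comp_apply,
      LinearEquiv.coe_coe, decomposeLinearEquiv_apply, Submodule.coe_subtype]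
    exact decompose_of_mem_ne 𝒜 hy hd
  have hx : π x = x := hfix x hx2
  have hmem : π x ∈ Submodule.map π (⨆ d, N d) := Submodule.mem_map_of_mem hx1
  rw [Submodule.map_iSup] at hmem
  have hle : (⨆ d, Submodule.map π (N d)) ≤ N s := by
    refine iSup_le fun d => ?_
    rintro _ ⟨z, hz, rfl⟩
    by_cases hd : d = s
    · subst hd; rw [hfix z (hN d hz)]; exact hz
    · rw [hzero d z hd (hN d hz)]; exact (N s).zero_mem
  rw [← hx]; exact hle hmem

/-- Let `A = ⊕_{i ≥ 0} A_i` be a positively graded, locally finite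
algebra generated in degrees 0 and 1, let `𝔯` be the Jacobson radical of `A_0`, and let
`ℜ = A𝔯A` be the two-sided ideal generated by `𝔯`.  Then the degree-`s` component
satisfies `ℜ_s = Σ_{i=0}^{s} A_i 𝔯 A_{s-i} = ((𝔯 + J)^{s+1})_s`, where `J = ⊕_{i ≥ 1} A_i`.
(Degree-`s` components of homogeneous subspaces are expressed as intersections with `A_s`.) -/
theorem stmt14
    {k A : Type*} [Field k] [Ring A] [Algebra k A]
    (𝒜 : ℕ → Submodule k A) [GradedAlgebra 𝒜]
    (hlf : ∀ i, FiniteDimensional k (𝒜 i))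
    (hgen : ∀ i, 𝒜 1 * 𝒜 i = 𝒜 (i + 1))
    -- `A₀` is the degree-0 part, viewed as a subalgebra
    (A₀ : Subalgebra k A) (hA₀ : A₀.toSubmodule = 𝒜 0)
    -- `𝔯` is (the image in `A` of) the Jacobson radical of `A₀`
    (𝔯 : Submodule k A)
    (h𝔯 : 𝔯 = Submodule.span k ((↑) '' ((Ideal.jacobson (⊥ : Ideal A₀) : Ideal A₀) : Set A₀)))
    (s : ℕ) :
    ((⊤ : Submodule k A) * 𝔯 * (⊤ : Submodule k A)) ⊓ 𝒜 s =
        (⨆ i ∈ Finset.range (s + 1), 𝒜 i * 𝔯 * 𝒜 (s - i)) ∧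
    ((⊤ : Submodule k A) * 𝔯 * (⊤ : Submodule k A)) ⊓ 𝒜 s =
        ((𝔯 ⊔ ⨆ n : ℕ, 𝒜 (n + 1)) ^ (s + 1)) ⊓ 𝒜 s := by
  classical
  set J : Submodule k A := ⨆ n : ℕ, 𝒜 (n + 1) with hJ
  set P : Submodule k A := 𝔯 ⊔ J with hP
  set X : Submodule k A := (⊤ : Submodule k A) * 𝔯 * (⊤ : Submodule k A) with hXdef
  set N : ℕ → Submodule k A := fun d => ⨆ i ∈ Finset.range (d + 1), 𝒜 i * 𝔯 * 𝒜 (d - i)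
    with hNdef
  -- basic facts
  have h𝔯0 : 𝔯 ≤ 𝒜 0 := by
    rw [h𝔯, ← hA₀]
    refine Submodule.span_le.mpr ?_
    rintro _ ⟨x, -, rfl⟩
    exact x.2
  have hmul : ∀ i j : ℕ, 𝒜 i * 𝒜 j ≤ 𝒜 (i + j) := fun i j =>
    Submodule.mul_le.mpr fun a ha b hb => SetLike.mul_mem_graded ha hb
  have htriple : ∀ i j : ℕ, 𝒜 i * 𝔯 * 𝒜 j ≤ 𝒜 (i + j) := fun i j => by
    calc 𝒜 i * 𝔯 * 𝒜 j ≤ (𝒜 i * 𝒜 0) * 𝒜 j :=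
          mul_le_mul_left (mul_le_mul_right h𝔯0 _) _
    _ ≤ 𝒜 (i + 0) * 𝒜 j := mul_le_mul_left (hmul i 0) _
    _ ≤ 𝒜 (i + 0 + j) := hmul _ _
    _ = 𝒜 (i + j) := by rw [add_zero]
  have hNle : ∀ d, N d ≤ 𝒜 d := fun d => by
    rw [hNdef]
    refine iSup_le fun i => iSup_le fun hi => ?_
    have hid : i + (d - i) = d :=
      Nat.add_sub_cancel' (Nat.lt_succ_iff.mp (Finset.mem_range.mp hi))
    simpa [hid] using htriple i (d - i)
  have htop : (⊤ : Submodule k A) = ⨆ i, 𝒜 i :=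
    (DirectSum.IsInternal.submodule_iSup_eq_top (DirectSum.Decomposition.isInternal 𝒜)).symm
  -- X as a sup of homogeneous pieces
  have hX : X = ⨆ d, N d := by
    apply le_antisymm
    · rw [hXdef, htop, Submodule.iSup_mul, Submodule.iSup_mul]
      refine iSup_le fun i => ?_
      rw [Submodule.mul_iSup]
      refine iSup_le fun j => ?_
      refine le_trans ?_ (le_iSup N (i + j))
      rw [hNdef]
      have h1 : i ∈ Finset.range (i + j + 1) := by
        simp only [Finset.mem_range]; omega
      have h2 : i + j - i = j := by omega
      refine le_trans ?_ (le_iSup₂ (f := fun i' _ => 𝒜 i' * 𝔯 * 𝒜 (i + j - i')) i h1)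
      rw [h2]
    · refine iSup_le fun d => ?_
      rw [hNdef]
      refine iSup_le fun i => iSup_le fun _ => ?_
      exact mul_le_mul' (mul_le_mul' le_top le_rfl) le_top
  have part1 : X ⊓ 𝒜 s = N s := by rw [hX]; exact stmt14_key 𝒜 N hNle s
  -- ideal properties of 𝔯 over 𝒜 0
  have h𝔯L : 𝒜 0 * 𝔯 ≤ 𝔯 := by
    refine Submodule.mul_le.mpr fun a ha b hb => ?_
    rw [← hA₀] at ha
    rw [h𝔯] at hb ⊢
    induction hb using Submodule.span_induction with
    | mem x hx =>
      obtain ⟨y, hy, rfl⟩ := hx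
      refine Submodule.subset_span ⟨⟨a, ha⟩ * y, Ideal.mul_mem_left _ _ hy, rfl⟩
    | zero => rw [mul_zero]; exact Submodule.zero_mem _
    | add x y _ _ hx hy => rw [mul_add]; exact Submodule.add_mem _ hx hy
    | smul c x _ hx => rw [Algebra.mul_smul_comm]; exact Submodule.smul_mem _ c hx
  have hbotmul : ∀ {x y : A₀}, x ∈ (⊥ : Ideal A₀) → x * y ∈ (⊥ : Ideal A₀) := by
    intro x y hx
    rw [Ideal.mem_bot] at hx ⊢
    rw [hx, zero_mul]
  have h𝔯R : 𝔯 * 𝒜 0 ≤ 𝔯 := by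
    refine Submodule.mul_le.mpr fun b hb a ha => ?_
    rw [← hA₀] at ha
    rw [h𝔯] at hb ⊢
    induction hb using Submodule.span_induction with
    | mem x hx =>
      obtain ⟨y, hy, rfl⟩ := hx
      exact Submodule.subset_span
        ⟨y * ⟨a, ha⟩, Ideal.mul_mem_right _ _ hy, rfl⟩
    | zero => rw [zero_mul]; exact Submodule.zero_mem _
    | add x y _ _ hx hy => rw [add_mul]; exact Submodule.add_mem _ hx hy
    | smul c x _ hx => rw [smul_mul_assoc]; exact Submodule.smul_mem _ c hx
  have hJA0 : J * 𝒜 0 ≤ J := by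
    rw [hJ, Submodule.iSup_mul]
    refine iSup_le fun n => ?_
    refine le_trans (le_trans (hmul (n + 1) 0) (le_of_eq ?_)) (le_iSup (fun n => 𝒜 (n + 1)) n)
    rw [add_zero]
  have hPA0 : P * 𝒜 0 ≤ P := by
    rw [hP, Submodule.sup_mul]
    exact sup_le (le_sup_of_le_left h𝔯R) (le_sup_of_le_right hJA0)
  have hA1J : 𝒜 1 ≤ J := le_iSup (fun n => 𝒜 (n + 1)) 0
  have hAiJ : ∀ i, 𝒜 i ≤ J ^ i * 𝒜 0 := by
    intro i
    induction i with
    | zero => rw [pow_zero, one_mul]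
    | succ n ih =>
      rw [← hgen n]
      calc 𝒜 1 * 𝒜 n ≤ J * (J ^ n * 𝒜 0) := mul_le_mul' hA1J ih
      _ = J ^ (n + 1) * 𝒜 0 := by rw [← mul_assoc, ← pow_succ']
  have h𝔯P : 𝔯 ≤ P := le_sup_left
  have hJP : J ≤ P := le_sup_right
  have hJnP : ∀ n, J ^ n ≤ P ^ n := fun n => pow_le_pow_left' hJP n
  -- N s ≤ P ^ (s + 1)
  have hNP : N s ≤ P ^ (s + 1) := by
    rw [hNdef]
    refine iSup_le fun i => iSup_le fun hi => ?_
    have his : i ≤ s := Nat.lt_succ_iff.mp (Finset.mem_range.mp hi)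
    calc 𝒜 i * 𝔯 * 𝒜 (s - i)
        ≤ J ^ i * 𝒜 0 * 𝔯 * (J ^ (s - i) * 𝒜 0) :=
          mul_le_mul' (mul_le_mul' (hAiJ i) le_rfl) (hAiJ (s - i))
      _ = J ^ i * (𝒜 0 * 𝔯) * J ^ (s - i) * 𝒜 0 := by
          rw [mul_assoc (J ^ i), ← mul_assoc (J ^ i * (𝒜 0 * 𝔯)), ← mul_assoc]
      _ ≤ J ^ i * 𝔯 * J ^ (s - i) * 𝒜 0 :=
          mul_le_mul_left (mul_le_mul_left
            (mul_le_mul_right h𝔯L _) _) _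
      _ ≤ P ^ i * P * P ^ (s - i) * 𝒜 0 :=
          mul_le_mul_left (mul_le_mul'
            (mul_le_mul' (hJnP i) h𝔯P) (hJnP (s - i))) _
      _ = P ^ (s + 1) * 𝒜 0 := by
          rw [← pow_succ, ← pow_add]
          congr 2
          omega
      _ = P ^ s * (P * 𝒜 0) := by rw [pow_succ, mul_assoc]
      _ ≤ P ^ s * P := mul_le_mul_right hPA0 _
      _ = P ^ (s + 1) := (pow_succ P s).symm
  -- X absorbs multiplication
  have h𝔯X : 𝔯 ≤ X := by
    rw [hXdef]
    calc 𝔯 = 1 * 𝔯 * 1 := by rw [one_mul, mul_one]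
    _ ≤ ⊤ * 𝔯 * ⊤ := mul_le_mul' (mul_le_mul' le_top le_rfl) le_top
  have hXr : ∀ M : Submodule k A, X * M ≤ X := fun M => by
    rw [hXdef]
    calc ⊤ * 𝔯 * ⊤ * M = ⊤ * 𝔯 * (⊤ * M) := by rw [mul_assoc]
    _ ≤ ⊤ * 𝔯 * ⊤ := mul_le_mul_right le_top _
  have hXl : ∀ M : Submodule k A, M * X ≤ X := fun M => by
    rw [hXdef]
    calc M * (⊤ * 𝔯 * ⊤) = M * ⊤ * 𝔯 * ⊤ := by rw [← mul_assoc, ← mul_assoc]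
    _ ≤ ⊤ * 𝔯 * ⊤ := mul_le_mul_left (mul_le_mul_left le_top _) _
  -- P ^ (n+1) ≤ X ⊔ J ^ (n+1)
  have hPX : ∀ n, P ^ (n + 1) ≤ X ⊔ J ^ (n + 1) := by
    intro n
    induction n with
    | zero =>
      rw [pow_one, pow_one, hP]
      exact sup_le (le_sup_of_le_left h𝔯X) le_sup_right
    | succ n ih =>
      rw [pow_succ]
      calc P ^ (n + 1) * P ≤ (X ⊔ J ^ (n + 1)) * (X ⊔ J) :=
            mul_le_mul' ih (by rw [hP]; exact sup_le (le_sup_of_le_left h𝔯X) le_sup_right)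
      _ = X * X ⊔ X * J ⊔ (J ^ (n + 1) * X ⊔ J ^ (n + 1) * J) := by
            rw [Submodule.sup_mul, Submodule.mul_sup, Submodule.mul_sup]
      _ ≤ X ⊔ J ^ (n + 2) := by
            refine sup_le (sup_le ?_ ?_) (sup_le ?_ ?_)
            · exact le_sup_of_le_left (hXr X)
            · exact le_sup_of_le_left (hXr J)
            · exact le_sup_of_le_left (hXl _)
            · exact le_sup_of_le_right (le_of_eq (pow_succ J (n + 1)).symm)
  -- J ^ (n+1) is concentrated in degrees ≥ n+1
  have hJK : ∀ n, J ^ (n + 1) ≤ ⨆ m, 𝒜 (m + (n + 1)) := by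
    intro n
    induction n with
    | zero => rw [pow_one]
    | succ n ih =>
      rw [pow_succ]
      calc J ^ (n + 1) * J ≤ (⨆ m, 𝒜 (m + (n + 1))) * ⨆ m, 𝒜 (m + 1) :=
            mul_le_mul' ih le_rfl
      _ ≤ ⨆ m, 𝒜 (m + (n + 2)) := by
            rw [Submodule.iSup_mul]
            refine iSup_le fun a => ?_
            rw [Submodule.mul_iSup]
            refine iSup_le fun b => ?_
            refine le_trans (hmul _ _) (le_trans (le_of_eq ?_)
              (le_iSup (fun m => 𝒜 (m + (n + 2))) (a + b)))
            congr 1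
            omega
  -- the sup decomposition for P ^ (s+1)
  set M : ℕ → Submodule k A := fun d => if d ≤ s then N d else 𝒜 d with hMdef
  have hMle : ∀ d, M d ≤ 𝒜 d := fun d => by
    by_cases h : d ≤ s <;> simp [hMdef, h, hNle d]
  have hNM : ∀ d, N d ≤ M d := fun d => by
    by_cases h : d ≤ s <;> simp [hMdef, h, hNle d]
  have hPle : P ^ (s + 1) ≤ ⨆ d, M d := by
    refine le_trans (hPX s) (sup_le ?_ ?_)
    · rw [hX]
      exact iSup_le fun d => le_trans (hNM d) (le_iSup M d)
    · refine le_trans (hJK s) (iSup_le fun m => ?_)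
      have h1 : ¬ (m + (s + 1) ≤ s) := by omega
      have h2 : M (m + (s + 1)) = 𝒜 (m + (s + 1)) := by simp [hMdef, h1]
      exact le_trans (le_of_eq h2.symm) (le_iSup M (m + (s + 1)))
  have hMs : M s = N s := by simp [hMdef]
  have part2 : P ^ (s + 1) ⊓ 𝒜 s = N s := by
    refine le_antisymm ?_ (le_inf hNP (hNle s))
    refine le_trans (inf_le_inf_right (𝒜 s) hPle) ?_
    rw [stmt14_key 𝒜 M hMle s, hMs]
  exact ⟨part1, part1.trans part2.symm⟩
end
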